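/- arXiv:2412.16347 — 6 statements merged into one kernel-verified Lean document; each statement's English description precedes it below -/
import Mathlib

section
/- Let n ∈ ℕ, let [a,b] ⊆ ℝ be a compact interval, and let Q : [a,b] → ℂ^{n×n} be pointwise Hermitian. Then the following are equivalent: (iii) Q is differentiable at almost every t ∈ [a,b], its a.e. derivative Q̇ is Bochner-integrable on [a,b], and Q(s) − Q(r) ≤ ∫_r^s Q̇(t) dt in the Loewner order for all a ≤ r ≤ s ≤ b; (iv) Q has bounded variation on [a,b] (the supremum over all partitions a = τ_0 < τ_1 < … < τ_K = b of Σ_k ‖Q(τ_k) − Q(τ_{k−1})‖ is finite), and its singular part Q_s : t ↦ Q(t) − ∫_a^t Q̇(τ) dτ is weakly decreasing, where Q̇ denotes the a.e. derivative of Q (which exists a.e. with Bochner-integrable values whenever Q has bounded variation). -/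
open MeasureTheory Matrix Set Filter Topology
open scoped ComplexOrder ENNReal

namespace Paper

/-- Loewner order `M ≤ N`, i.e. `N - M` is positive semidefinite. -/
def LoewnerLE {n : ℕ} (M N : Matrix (Fin n) (Fin n) ℂ) : Prop := (N - M).PosSemidef

/-- Entrywise (Bochner) interval integral of a matrix-valued function. -/
noncomputable def matInt {k l : ℕ} (G : ℝ → Matrix (Fin k) (Fin l) ℂ) (r s : ℝ) :
    Matrix (Fin k) (Fin l) ℂ :=
  Matrix.of fun i j => ∫ t in r..s, G t i j

/-- `Q` is absolutely upper semicontinuous on `[a,b]`: there is a Bochner-integrable,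
pointwise Hermitian `G` with `Q s - Q r ≤ ∫_r^s G` in the Loewner order. -/
def IsAUCOn {n : ℕ} (Q : ℝ → Matrix (Fin n) (Fin n) ℂ) (a b : ℝ) : Prop :=
  ∃ G : ℝ → Matrix (Fin n) (Fin n) ℂ,
    (∀ t, (G t).IsHermitian) ∧
    (∀ i j, IntegrableOn (fun t => G t i j) (Icc a b)) ∧
    ∀ r s : ℝ, a ≤ r → r ≤ s → s ≤ b → LoewnerLE (Q s - Q r) (matInt G r s)

/-- A matrix-valued function is locally `L^p` on `I` (entrywise, on compact subintervals). -/
def MemLocLp {k l : ℕ} (p : ℝ≥0∞) (I : Set ℝ) (F : ℝ → Matrix (Fin k) (Fin l) ℂ) : Prop :=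
  ∀ a b : ℝ, a ∈ I → b ∈ I → ∀ i j, MemLp (fun t => F t i j) p (volume.restrict (Icc a b))

/-- A vector-valued function is locally `L^p` on `I`. -/
def VecMemLocLp {k : ℕ} (p : ℝ≥0∞) (I : Set ℝ) (f : ℝ → Fin k → ℂ) : Prop :=
  ∀ a b : ℝ, a ∈ I → b ∈ I → ∀ i, MemLp (fun t => f t i) p (volume.restrict (Icc a b))

/-- `x` is locally absolutely continuous on `I` with (a.e.) derivative `x'`. -/
def VecLocAC {k : ℕ} (I : Set ℝ) (x x' : ℝ → Fin k → ℂ) : Prop :=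
  (∀ a b : ℝ, a ∈ I → b ∈ I → ∀ i, IntegrableOn (fun t => x' t i) (Icc a b)) ∧
  ∀ s t : ℝ, s ∈ I → t ∈ I → ∀ i, x t i = x s i + ∫ τ in s..t, x' τ i

/-- A matrix function is locally absolutely continuous on `I` with (a.e.) derivative `X'`. -/
def MatLocAC {k l : ℕ} (I : Set ℝ) (X X' : ℝ → Matrix (Fin k) (Fin l) ℂ) : Prop :=
  (∀ a b : ℝ, a ∈ I → b ∈ I → ∀ i j, IntegrableOn (fun t => X' t i j) (Icc a b)) ∧
  ∀ s t : ℝ, s ∈ I → t ∈ I → ∀ i j, X t i j = X s i j + ∫ τ in s..t, X' τ i j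

/-- The coefficients of an LTV system lie in the appropriate local Lebesgue spaces. -/
def IsLTV {n m : ℕ} (I : Set ℝ)
    (A : ℝ → Matrix (Fin n) (Fin n) ℂ) (B : ℝ → Matrix (Fin n) (Fin m) ℂ)
    (C : ℝ → Matrix (Fin m) (Fin n) ℂ) (D : ℝ → Matrix (Fin m) (Fin m) ℂ) : Prop :=
  MemLocLp 1 I A ∧ MemLocLp 2 I B ∧ MemLocLp 2 I C ∧ MemLocLp ⊤ I D

/-- `(x, u, y)` is a state-input-output solution of the LTV system on `I`. -/
def IsSIOSol {n m : ℕ} (I : Set ℝ)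
    (A : ℝ → Matrix (Fin n) (Fin n) ℂ) (B : ℝ → Matrix (Fin n) (Fin m) ℂ)
    (C : ℝ → Matrix (Fin m) (Fin n) ℂ) (D : ℝ → Matrix (Fin m) (Fin m) ℂ)
    (x : ℝ → Fin n → ℂ) (u y : ℝ → Fin m → ℂ) : Prop :=
  VecMemLocLp 2 I u ∧ VecMemLocLp 2 I y ∧
  (∃ x', VecLocAC I x x' ∧ ∀ᵐ t ∂volume, t ∈ I → x' t = A t *ᵥ x t + B t *ᵥ u t) ∧
  ∀ᵐ t ∂volume, t ∈ I → y t = C t *ᵥ x t + D t *ᵥ u t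

/-- The supplied energy `∫_{t0}^{t1} Re (y(t)^* u(t)) dt`. -/
noncomputable def supply {k : ℕ} (u y : ℝ → Fin k → ℂ) (t0 t1 : ℝ) : ℝ :=
  ∫ t in t0..t1, (star (y t) ⬝ᵥ u t).re

/-- `V` is a storage function for the LTV system on `I`. -/
def IsStorage {n m : ℕ} (I : Set ℝ)
    (A : ℝ → Matrix (Fin n) (Fin n) ℂ) (B : ℝ → Matrix (Fin n) (Fin m) ℂ)
    (C : ℝ → Matrix (Fin m) (Fin n) ℂ) (D : ℝ → Matrix (Fin m) (Fin m) ℂ)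
    (V : ℝ → (Fin n → ℂ) → ℝ) : Prop :=
  (∀ t ∈ I, ∀ x, 0 ≤ V t x) ∧ (∀ t ∈ I, V t 0 = 0) ∧
  ∀ x u y, IsSIOSol I A B C D x u y → ∀ t0 t1 : ℝ, t0 ∈ I → t1 ∈ I → t0 ≤ t1 →
    V t1 (x t1) - V t0 (x t0) ≤ supply u y t0 t1

/-- The quadratic storage function candidate `V_Q(t, x) = ½ x^* Q(t) x`. -/
noncomputable def quadStorage {k : ℕ} (Q : ℝ → Matrix (Fin k) (Fin k) ℂ) :
    ℝ → (Fin k → ℂ) → ℝ :=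
  fun t x => (1 / 2 : ℝ) * (star x ⬝ᵥ (Q t *ᵥ x)).re

/-- `X` is a fundamental solution matrix for `A` anchored at `t0`. -/
def IsFundamental {n : ℕ} (I : Set ℝ) (A : ℝ → Matrix (Fin n) (Fin n) ℂ) (t0 : ℝ)
    (X : ℝ → Matrix (Fin n) (Fin n) ℂ) : Prop :=
  t0 ∈ I ∧ X t0 = 1 ∧ (∀ t ∈ I, IsUnit (X t)) ∧
  ∃ X', MatLocAC I X X' ∧ ∀ᵐ t ∂volume, t ∈ I → X' t = A t * X t

/-- The supply set whose supremum is the available storage `V_a(t0, x0)`. -/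
def supplySet {n m : ℕ} (I : Set ℝ)
    (A : ℝ → Matrix (Fin n) (Fin n) ℂ) (B : ℝ → Matrix (Fin n) (Fin m) ℂ)
    (C : ℝ → Matrix (Fin m) (Fin n) ℂ) (D : ℝ → Matrix (Fin m) (Fin m) ℂ)
    (t0 : ℝ) (x0 : Fin n → ℂ) : Set ℝ :=
  { c | ∃ t1 x u y, t1 ∈ I ∧ t0 ≤ t1 ∧ IsSIOSol I A B C D x u y ∧ x t0 = x0 ∧
      c = -(supply u y t0 t1) }

/-- Null space decomposition structure: `M i j = 0` whenever `i` or `j` (0-based) is `≥ r`,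
and the top-left `r × r` block of `M` is Hermitian positive definite. -/
def NSDStruct {k : ℕ} (M : Matrix (Fin k) (Fin k) ℂ) (r : ℕ) : Prop :=
  (∀ i j : Fin k, (r ≤ (i : ℕ) ∨ r ≤ (j : ℕ)) → M i j = 0) ∧
  ∀ h : r ≤ k, (M.submatrix (Fin.castLE h) (Fin.castLE h)).PosDef

attribute [local instance] Matrix.normedAddCommGroup

lemma psd_diag {k : ℕ} {P : Matrix (Fin k) (Fin k) ℂ} (hP : P.PosSemidef) (i : Fin k) :
    0 ≤ P i i := by
  have h := hP.dotProduct_mulVec_nonneg (Pi.single i 1)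
  have hs : star (Pi.single i 1 : Fin k → ℂ) = Pi.single i 1 := by
    funext l; simp [Pi.single_apply, apply_ite (star : ℂ → ℂ)]
  rw [hs, Matrix.mulVec_single, single_dotProduct] at h
  simpa using h

lemma psd_entry_norm_le {k : ℕ} {P : Matrix (Fin k) (Fin k) ℂ} (hP : P.PosSemidef) (i j : Fin k) :
    ‖P i j‖ ≤ (P i i).re + (P j j).re := by
  have hdi := psd_diag hP i
  have hdj := psd_diag hP j
  rw [Complex.le_def] at hdi hdj
  simp only [Complex.zero_re, Complex.zero_im] at hdi hdj
  by_cases hij : i = j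
  · subst hij
    have hval : P i i = ((P i i).re : ℂ) := by
      apply Complex.ext <;> simp [← hdi.2]
    rw [hval, Complex.norm_real, Real.norm_eq_abs, abs_of_nonneg (by simpa using hdi.1)]
    simpa using hdi.1
  · by_cases hc : P i j = 0
    · rw [hc, norm_zero]; linarith [hdi.1, hdj.1]
    · set c := P i j with hcdef
      set r : ℝ := ‖c‖ with hrdef
      have hr : (0:ℝ) < r := norm_pos_iff.2 hc
      have hr' : (r : ℂ) ≠ 0 := by exact_mod_cast hr.ne'
      set β : ℂ := -(starRingEnd ℂ c) / (r : ℂ) with hβ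
      set x : Fin k → ℂ := Pi.single i 1 + Pi.single j β with hx
      have hstar : star x = Pi.single i 1 + Pi.single j (starRingEnd ℂ β) := by
        funext l
        simp [hx, Pi.single_apply, apply_ite (starRingEnd ℂ)]
      have hmv : P *ᵥ x = (fun l => P l i) + fun l => P l j * β := by
        rw [hx, Matrix.mulVec_add]
        funext l
        simp [Matrix.mulVec_single]
        ring
      have hherm : P j i = starRingEnd ℂ c := by
        rw [hcdef, ← Complex.star_def]
        exact (hP.1.apply j i).symm
      have hval : star x ⬝ᵥ (P *ᵥ x)
          = P i i + P i j * β + starRingEnd ℂ β * P j i + starRingEnd ℂ β * P j j * β := by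
        rw [hstar, hmv]
        simp only [add_dotProduct, dotProduct_add, single_dotProduct]
        simp [Pi.add_apply]
        ring
      have hcc : c * starRingEnd ℂ c = (r : ℂ) * r := by
        rw [Complex.mul_conj, Complex.normSq_eq_norm_sq, hrdef, sq]
        norm_cast
      have h1 : c * β = -(r : ℂ) := by
        rw [hβ]; field_simp; linear_combination -hcc
      have h2 : starRingEnd ℂ β * starRingEnd ℂ c = -(r : ℂ) := by
        rw [hβ]
        simp only [map_div₀, map_neg, Complex.conj_conj, Complex.conj_ofReal]
        field_simp
        linear_combination -hcc
      have h3 : starRingEnd ℂ β * β = 1 := by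
        rw [hβ]
        simp only [map_div₀, map_neg, Complex.conj_conj, Complex.conj_ofReal]
        field_simp
        linear_combination hcc
      have hexp : star x ⬝ᵥ (P *ᵥ x) = P i i + P j j - 2 * (r : ℂ) := by
        rw [hval, hherm, ← hcdef]
        linear_combination h1 + h2 + P j j * h3
      have h0 := hP.dotProduct_mulVec_nonneg x
      rw [hexp, Complex.le_def] at h0
      simp only [Complex.zero_re, Complex.sub_re, Complex.add_re, Complex.ofReal_re,
        Complex.mul_re, Complex.ofReal_im] at h0
      have := h0.1
      norm_num at this
      linarith

set_option maxHeartbeats 1000000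

/-- the a.e.-derivative characterization (iii) is equivalent to bounded
variation with weakly decreasing singular part (iv). -/
theorem statement2 {n : ℕ} (a b : ℝ) (hab : a ≤ b)
    (Q : ℝ → Matrix (Fin n) (Fin n) ℂ)
    (hQherm : ∀ t ∈ Icc a b, (Q t).IsHermitian) :
    (∃ Q' : ℝ → Matrix (Fin n) (Fin n) ℂ,
      (∀ᵐ t ∂volume, t ∈ Icc a b → ∀ i j, HasDerivAt (fun τ => Q τ i j) (Q' t i j) t) ∧
      (∀ i j, IntegrableOn (fun t => Q' t i j) (Icc a b)) ∧
      ∀ r s : ℝ, a ≤ r → r ≤ s → s ≤ b → LoewnerLE (Q s - Q r) (matInt Q' r s)) ↔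
    (BoundedVariationOn Q (Icc a b) ∧
      ∃ Q' : ℝ → Matrix (Fin n) (Fin n) ℂ,
        (∀ᵐ t ∂volume, t ∈ Icc a b → ∀ i j, HasDerivAt (fun τ => Q τ i j) (Q' t i j) t) ∧
        (∀ i j, IntegrableOn (fun t => Q' t i j) (Icc a b)) ∧
        ∀ r s : ℝ, a ≤ r → r ≤ s → s ≤ b →
          LoewnerLE (Q s - matInt Q' a s) (Q r - matInt Q' a r)) := by
  have hconv : ∀ (Q' : ℝ → Matrix (Fin n) (Fin n) ℂ),
      (∀ i j, IntegrableOn (fun t => Q' t i j) (Icc a b)) →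
      ∀ r s : ℝ, a ≤ r → r ≤ s → s ≤ b →
        Q r - matInt Q' a r - (Q s - matInt Q' a s) = matInt Q' r s - (Q s - Q r) := by
    intro Q' hint r s har hrs hsb
    have hII : ∀ (i j : Fin n) (r' s' : ℝ), a ≤ r' → r' ≤ s' → s' ≤ b →
        IntervalIntegrable (fun t => Q' t i j) volume r' s' := by
      intro i j r' s' h1 h2 h3
      rw [intervalIntegrable_iff_integrableOn_Ioc_of_le h2]
      exact (hint i j).mono_set (Ioc_subset_Icc_self.trans (Icc_subset_Icc h1 h3))
    ext i j
    have hadd := intervalIntegral.integral_add_adjacent_intervals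
      (hII i j a r le_rfl har (hrs.trans hsb)) (hII i j r s har hrs hsb)
    simp only [Matrix.sub_apply, matInt, Matrix.of_apply]
    linear_combination -hadd
  constructor
  · rintro ⟨Q', hderiv, hint, hle⟩
    refine ⟨?_, Q', hderiv, hint, fun r s har hrs hsb => ?_⟩
    · -- Bounded variation
      classical
      have hIntN : ∀ (i j : Fin n), IntegrableOn (fun t => ‖Q' t i j‖) (Icc a b) volume :=
        fun i j => (hint i j).norm
      have hII : ∀ (i j : Fin n) (r s : ℝ), a ≤ r → r ≤ s → s ≤ b →
          IntervalIntegrable (fun t => ‖Q' t i j‖) volume r s := by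
        intro i j r s h1 h2 h3
        rw [intervalIntegrable_iff_integrableOn_Ioc_of_le h2]
        exact (hIntN i j).mono_set (Ioc_subset_Icc_self.trans (Icc_subset_Icc h1 h3))
      set R : Matrix (Fin n) (Fin n) ℂ → ℝ := fun X => ∑ i, (X i i).re with hRdef
      set C : ℝ := ∑ i : Fin n, ∑ j : Fin n, ∫ t in Icc a b, ‖Q' t i j‖ with hCdef
      have hIcc : ∀ (i j : Fin n) (r s : ℝ), a ≤ r → r ≤ s → s ≤ b →
          (∫ t in r..s, ‖Q' t i j‖) ≤ ∫ t in Icc a b, ‖Q' t i j‖ := by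
        intro i j r s h1 h2 h3
        rw [intervalIntegral.integral_of_le h2]
        refine setIntegral_mono_set (hIntN i j)
          (Eventually.of_forall fun t => norm_nonneg _) ?_
        exact HasSubset.Subset.eventuallyLE (Ioc_subset_Icc_self.trans (Icc_subset_Icc h1 h3))
      have hkey : ∀ r s : ℝ, a ≤ r → r ≤ s → s ≤ b →
          ‖Q s - Q r‖ ≤ 3 * (∑ i : Fin n, ∑ j : Fin n, ∫ t in r..s, ‖Q' t i j‖)
            + 2 * (R (Q r) - R (Q s)) := by
        intro r s har hrs hsb
        have hP : (matInt Q' r s - (Q s - Q r)).PosSemidef := hle r s har hrs hsb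
        set M := matInt Q' r s with hM
        set P := M - (Q s - Q r) with hPd
        set G : ℝ := ∑ i : Fin n, ∑ j : Fin n, ∫ t in r..s, ‖Q' t i j‖ with hGdef
        have hgnn : ∀ (i j : Fin n), 0 ≤ ∫ t in r..s, ‖Q' t i j‖ := fun i j =>
          intervalIntegral.integral_nonneg hrs (fun t _ => norm_nonneg _)
        have hGnn : 0 ≤ G :=
          Finset.sum_nonneg fun i _ => Finset.sum_nonneg fun j _ => hgnn i j
        have hMentry : ∀ i j, ‖M i j‖ ≤ ∫ t in r..s, ‖Q' t i j‖ := by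
          intro i j
          simpa [hM, matInt] using intervalIntegral.norm_integral_le_integral_norm
            (f := fun t => Q' t i j) (μ := volume) (a := r) (b := s) hrs
        have hentryG : ∀ (i j : Fin n), (∫ t in r..s, ‖Q' t i j‖) ≤ G := by
          intro i j
          rw [hGdef]
          calc (∫ t in r..s, ‖Q' t i j‖) ≤ ∑ j' : Fin n, ∫ t in r..s, ‖Q' t i j'‖ :=
            Finset.single_le_sum (fun j' _ => hgnn i j') (Finset.mem_univ j)
          _ ≤ _ := Finset.single_le_sum
              (fun i' _ => Finset.sum_nonneg fun j' _ => hgnn i' j') (Finset.mem_univ i)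
        have hMnorm : ‖M‖ ≤ G :=
          (Matrix.norm_le_iff hGnn).2 fun i j => (hMentry i j).trans (hentryG i j)
        have hRM : R M ≤ G := by
          rw [hRdef]
          calc ∑ i, (M i i).re ≤ ∑ i : Fin n, ∫ t in r..s, ‖Q' t i i‖ :=
            Finset.sum_le_sum fun i _ =>
              le_trans (Complex.re_le_norm (M i i)) (hMentry i i)
          _ ≤ G := Finset.sum_le_sum fun i _ =>
              Finset.single_le_sum (fun j _ => hgnn i j) (Finset.mem_univ i)
        have hPdiagnn : ∀ i, 0 ≤ (P i i).re := by
          intro i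
          have h := (Complex.le_def.1 (psd_diag hP i)).1
          simpa using h
        have hRPnn : 0 ≤ R P := Finset.sum_nonneg fun i _ => hPdiagnn i
        have hPentry : ∀ i j, ‖P i j‖ ≤ 2 * R P := by
          intro i j
          have h := psd_entry_norm_le hP i j
          have hi : (P i i).re ≤ R P :=
            Finset.single_le_sum (fun l _ => hPdiagnn l) (Finset.mem_univ i)
          have hj : (P j j).re ≤ R P :=
            Finset.single_le_sum (fun l _ => hPdiagnn l) (Finset.mem_univ j)
          linarith
        have hPnorm : ‖P‖ ≤ 2 * R P :=
          (Matrix.norm_le_iff (by linarith)).2 hPentry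
        have hRP : R P = R M - (R (Q s) - R (Q r)) := by
          simp [hRdef, hPd, Matrix.sub_apply, Complex.sub_re, Finset.sum_sub_distrib]
        have hQsr : Q s - Q r = M - P := by rw [hPd]; abel
        calc ‖Q s - Q r‖ = ‖M - P‖ := by rw [hQsr]
          _ ≤ ‖M‖ + ‖P‖ := norm_sub_le _ _
          _ ≤ G + 2 * R P := add_le_add hMnorm hPnorm
          _ = G + 2 * (R M - (R (Q s) - R (Q r))) := by rw [hRP]
          _ ≤ 3 * G + 2 * (R (Q r) - R (Q s)) := by linarith
      have hkeyR : ∀ r s : ℝ, a ≤ r → r ≤ s → s ≤ b → R (Q s) - R (Q r) ≤ C := by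
        intro r s har hrs hsb
        have hP : (matInt Q' r s - (Q s - Q r)).PosSemidef := hle r s har hrs hsb
        have hdiag : ∀ i : Fin n, (Q s i i).re - (Q r i i).re ≤ (matInt Q' r s i i).re := by
          intro i
          have h := (Complex.le_def.1 (psd_diag hP i)).1
          simp only [Matrix.sub_apply, Complex.sub_re, Complex.zero_re] at h
          linarith
        have hM : ∀ i : Fin n, (matInt Q' r s i i).re ≤ ∫ t in Icc a b, ‖Q' t i i‖ := by
          intro i
          have h1 : (matInt Q' r s i i).re ≤ ‖matInt Q' r s i i‖ :=
            Complex.re_le_norm _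
          have h2 : ‖matInt Q' r s i i‖ ≤ ∫ t in r..s, ‖Q' t i i‖ := by
            simpa [matInt] using intervalIntegral.norm_integral_le_integral_norm
              (f := fun t => Q' t i i) (μ := volume) (a := r) (b := s) hrs
          exact h1.trans (h2.trans (hIcc i i r s har hrs hsb))
        have hInn : ∀ (i j : Fin n), 0 ≤ ∫ t in Icc a b, ‖Q' t i j‖ := fun i j =>
          setIntegral_nonneg measurableSet_Icc fun t _ => norm_nonneg _
        calc R (Q s) - R (Q r) = ∑ i : Fin n, ((Q s i i).re - (Q r i i).re) := by
              rw [hRdef]; rw [Finset.sum_sub_distrib]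
          _ ≤ ∑ i : Fin n, ∫ t in Icc a b, ‖Q' t i i‖ :=
              Finset.sum_le_sum fun i _ => (hdiag i).trans (hM i)
          _ ≤ C := by
              rw [hCdef]
              exact Finset.sum_le_sum fun i _ =>
                Finset.single_le_sum (fun j _ => hInn i j) (Finset.mem_univ i)
      show eVariationOn Q (Icc a b) ≠ ⊤
      refine ne_top_of_le_ne_top
        (ENNReal.ofReal_ne_top (r := 7 * C + 2 * (R (Q a) - R (Q b)))) ?_
      unfold eVariationOn
      refine iSup_le ?_
      rintro ⟨N, u, hu, hus⟩
      calc ∑ k ∈ Finset.range N, edist (Q (u (k + 1))) (Q (u k))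
          = ENNReal.ofReal (∑ k ∈ Finset.range N, dist (Q (u (k + 1))) (Q (u k))) := by
            rw [ENNReal.ofReal_sum_of_nonneg fun k _ => dist_nonneg]
            exact Finset.sum_congr rfl fun k _ => edist_dist _ _
        _ ≤ ENNReal.ofReal (7 * C + 2 * (R (Q a) - R (Q b))) := by
            refine ENNReal.ofReal_le_ofReal ?_
            have hbound : ∀ k : ℕ, dist (Q (u (k + 1))) (Q (u k)) ≤
                3 * (∑ i : Fin n, ∑ j : Fin n, ∫ t in u k..u (k + 1), ‖Q' t i j‖)
                  + 2 * (R (Q (u k)) - R (Q (u (k + 1)))) := by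
              intro k
              rw [dist_eq_norm]
              exact hkey (u k) (u (k + 1)) (hus k).1 (hu (Nat.le_succ k)) (hus (k + 1)).2
            have hsum2 : ∀ (i j : Fin n),
                (∑ k ∈ Finset.range N, ∫ t in u k..u (k + 1), ‖Q' t i j‖)
                  ≤ ∫ t in Icc a b, ‖Q' t i j‖ := by
              intro i j
              rw [intervalIntegral.sum_integral_adjacent_intervals fun k _ =>
                hII i j (u k) (u (k + 1)) (hus k).1 (hu (Nat.le_succ k)) (hus (k + 1)).2]
              exact hIcc i j (u 0) (u N) (hus 0).1 (hu (Nat.zero_le N)) (hus N).2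
            have hsum3 : (∑ k ∈ Finset.range N,
                ∑ i : Fin n, ∑ j : Fin n, ∫ t in u k..u (k + 1), ‖Q' t i j‖) ≤ C := by
              rw [hCdef, Finset.sum_comm]
              refine Finset.sum_le_sum fun i _ => ?_
              rw [Finset.sum_comm]
              exact Finset.sum_le_sum fun j _ => hsum2 i j
            have htel : ∑ k ∈ Finset.range N, (R (Q (u k)) - R (Q (u (k + 1))))
                = R (Q (u 0)) - R (Q (u N)) :=
              Finset.sum_range_sub' (fun k => R (Q (u k))) N
            have hRa : R (Q (u 0)) - R (Q a) ≤ C :=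
              hkeyR a (u 0) le_rfl (hus 0).1 (hus 0).2
            have hRb : R (Q b) - R (Q (u N)) ≤ C :=
              hkeyR (u N) b (hus N).1 (hus N).2 le_rfl
            calc ∑ k ∈ Finset.range N, dist (Q (u (k + 1))) (Q (u k))
                ≤ ∑ k ∈ Finset.range N,
                    (3 * (∑ i : Fin n, ∑ j : Fin n, ∫ t in u k..u (k + 1), ‖Q' t i j‖)
                      + 2 * (R (Q (u k)) - R (Q (u (k + 1))))) :=
                  Finset.sum_le_sum fun k _ => hbound k
              _ = 3 * (∑ k ∈ Finset.range N,
                    ∑ i : Fin n, ∑ j : Fin n, ∫ t in u k..u (k + 1), ‖Q' t i j‖)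
                  + 2 * (R (Q (u 0)) - R (Q (u N))) := by
                  rw [Finset.sum_add_distrib, ← Finset.mul_sum, ← Finset.mul_sum, htel]
              _ ≤ 7 * C + 2 * (R (Q a) - R (Q b)) := by linarith
    · show (Q r - matInt Q' a r - (Q s - matInt Q' a s)).PosSemidef
      rw [hconv Q' hint r s har hrs hsb]
      exact hle r s har hrs hsb
  · rintro ⟨-, Q', hderiv, hint, hle⟩
    refine ⟨Q', hderiv, hint, fun r s har hrs hsb => ?_⟩
    show (matInt Q' r s - (Q s - Q r)).PosSemidef
    rw [← hconv Q' hint r s har hrs hsb]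
    exact hle r s har hrs hsb


end Paper
end

section
/- Let n ∈ ℕ, let I ⊆ ℝ be an open interval, let Q : I → ℂ^{n×n} be pointwise Hermitian and locally absolutely upper semicontinuous, and let t0 ∈ I. If L ∈ ℂ^{n×n} is such that Q(t) → L as t → t0 from the left, then L ≥ Q(t0) in the Loewner order; if R ∈ ℂ^{n×n} is such that Q(t) → R as t → t0 from the right, then Q(t0) ≥ R in the Loewner order. -/
open MeasureTheory Matrix Set Filter Topology
open scoped ComplexOrder ENNReal

namespace Paper

lemma qf_tendsto {n : ℕ} {M : ℝ → Matrix (Fin n) (Fin n) ℂ} {l : Filter ℝ}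
    {L : Matrix (Fin n) (Fin n) ℂ}
    (h : ∀ i j, Tendsto (fun t => M t i j) l (𝓝 (L i j))) (v : Fin n → ℂ) :
    Tendsto (fun t => star v ⬝ᵥ (M t *ᵥ v)) l (𝓝 (star v ⬝ᵥ (L *ᵥ v))) := by
  simp only [dotProduct, Matrix.mulVec, Pi.star_apply]
  refine tendsto_finset_sum _ fun i _ => Tendsto.const_mul _ ?_
  exact tendsto_finset_sum _ fun j _ => (h i j).mul tendsto_const_nhds

lemma herm_qf_im {n : ℕ} {M : Matrix (Fin n) (Fin n) ℂ} (h : M.IsHermitian) (v : Fin n → ℂ) :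
    (star v ⬝ᵥ (M *ᵥ v)).im = 0 := by
  have hz : star (star v ⬝ᵥ (M *ᵥ v)) = star v ⬝ᵥ (M *ᵥ v) := by
    conv_lhs => rw [star_dotProduct, star_star, star_mulVec,
      ← Matrix.dotProduct_mulVec, h.eq]
  rw [← Complex.conj_eq_iff_im, ← Complex.star_def, hz]

/-- a locally AUC pointwise Hermitian matrix function has one-sided limits
sandwiching its value: `lim_{t→t0⁻} Q(t) ≥ Q(t0) ≥ lim_{t→t0⁺} Q(t)`. -/
theorem statement3 {n : ℕ} (I : Set ℝ) (hIopen : IsOpen I) (hIconn : I.OrdConnected)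
    (Q : ℝ → Matrix (Fin n) (Fin n) ℂ) (hQherm : ∀ t ∈ I, (Q t).IsHermitian)
    (hAUC : ∀ a b : ℝ, a ∈ I → b ∈ I → IsAUCOn Q a b)
    (t0 : ℝ) (ht0 : t0 ∈ I) :
    (∀ L : Matrix (Fin n) (Fin n) ℂ,
        (∀ i j, Tendsto (fun t => Q t i j) (𝓝[<] t0) (𝓝 (L i j))) →
        LoewnerLE (Q t0) L) ∧
    (∀ R : Matrix (Fin n) (Fin n) ℂ,
        (∀ i j, Tendsto (fun t => Q t i j) (𝓝[>] t0) (𝓝 (R i j))) →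
        LoewnerLE R (Q t0)) := by
  obtain ⟨ε, hε, hball⟩ := Metric.isOpen_iff.mp hIopen t0 ht0
  set a := t0 - ε / 2 with ha
  set b := t0 + ε / 2 with hb
  have hsub : Icc a b ⊆ I := fun x hx => hball (by
    rw [Metric.mem_ball, Real.dist_eq, abs_lt]
    obtain ⟨h1, h2⟩ := hx
    constructor <;> [skip; skip] <;> simp only [ha, hb] at h1 h2 <;> linarith)
  have haI : a ∈ I := hsub ⟨le_rfl, by simp only [ha, hb]; linarith⟩
  have hbI : b ∈ I := hsub ⟨by simp only [ha, hb]; linarith, le_rfl⟩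
  have hat0 : a < t0 := by simp only [ha]; linarith
  have ht0b : t0 < b := by simp only [hb]; linarith
  obtain ⟨G, hGherm, hGint, hGle⟩ := hAUC a b haI hbI
  constructor
  · -- left limit
    intro L hL
    have hmemIoo : Ioo a t0 ∈ 𝓝[<] t0 := Ioo_mem_nhdsLT_of_mem ⟨hat0, le_rfl⟩
    have hLh : L.IsHermitian := by
      refine Matrix.ext fun i j => ?_
      have h1 : Tendsto (fun t => Q t i j) (𝓝[<] t0) (𝓝 (L i j)) := hL i j
      have h2 : Tendsto (fun t => Q t i j) (𝓝[<] t0) (𝓝 (star (L j i))) := by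
        refine Tendsto.congr' ?_ ((continuous_star.tendsto _).comp (hL j i))
        filter_upwards [hmemIoo] with t ht
        have htI : t ∈ I := hsub ⟨ht.1.le, ht.2.le.trans ht0b.le⟩
        exact congrFun (congrFun (hQherm t htI).eq i) j
      simpa [Matrix.conjTranspose_apply] using tendsto_nhds_unique h2 h1
    refine posSemidef_iff_dotProduct_mulVec.mpr ⟨hLh.sub (hQherm t0 ht0), fun v => ?_⟩
    rw [Complex.le_def]
    refine ⟨?_, (herm_qf_im (hLh.sub (hQherm t0 ht0)) v).symm ▸ rfl⟩
    have hmono : ∀ᶠ t in 𝓝[<] t0,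
        (star v ⬝ᵥ (Q t0 *ᵥ v)).re - (star v ⬝ᵥ (Q t *ᵥ v)).re
          ≤ (star v ⬝ᵥ (matInt G t t0 *ᵥ v)).re := by
      filter_upwards [hmemIoo] with t ht
      have h := (posSemidef_iff_dotProduct_mulVec.mp (hGle t t0 ht.1.le ht.2.le ht0b.le)).2 v
      have h0 := (Complex.le_def.mp h).1
      simp only [Matrix.sub_mulVec, dotProduct_sub, Complex.sub_re, Complex.zero_re] at h0
      linarith
    have hA : Tendsto (fun t => (star v ⬝ᵥ (Q t0 *ᵥ v)).re - (star v ⬝ᵥ (Q t *ᵥ v)).re)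
        (𝓝[<] t0) (𝓝 ((star v ⬝ᵥ (Q t0 *ᵥ v)).re - (star v ⬝ᵥ (L *ᵥ v)).re)) :=
      tendsto_const_nhds.sub ((Complex.continuous_re.tendsto _).comp (qf_tendsto hL v))
    have hB : Tendsto (fun t => (star v ⬝ᵥ (matInt G t t0 *ᵥ v)).re) (𝓝[<] t0) (𝓝 0) := by
      have hIJ : ∀ i j, Tendsto (fun t => matInt G t t0 i j) (𝓝[<] t0)
          (𝓝 ((0 : Matrix (Fin n) (Fin n) ℂ) i j)) := by
        intro i j
        have hint : IntegrableOn (fun s => G s i j) (uIcc a t0) :=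
          (hGint i j).mono_set (by
            rw [uIcc_of_le hat0.le]; exact Icc_subset_Icc le_rfl ht0b.le)
        have hcont := intervalIntegral.continuousOn_primitive_interval_left hint
        have htd : Tendsto (fun x => ∫ s in x..t0, G s i j) (𝓝[uIcc a t0] t0)
            (𝓝 (∫ s in t0..t0, G s i j)) := hcont t0 right_mem_uIcc
        rw [intervalIntegral.integral_same] at htd
        have hle : 𝓝[<] t0 ≤ 𝓝[uIcc a t0] t0 := nhdsWithin_le_iff.mpr
          (mem_of_superset hmemIoo (by
            rw [uIcc_of_le hat0.le]; exact Ioo_subset_Icc_self))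
        simpa [matInt, Matrix.zero_apply] using htd.mono_left hle
      have := (Complex.continuous_re.tendsto _).comp (qf_tendsto hIJ v)
      simpa [Function.comp_def] using this
    have hfinal := le_of_tendsto_of_tendsto hA hB hmono
    simp only [Matrix.sub_mulVec, dotProduct_sub, Complex.sub_re, Complex.zero_re]
    linarith
  · -- right limit
    intro R hR
    have hmemIoo : Ioo t0 b ∈ 𝓝[>] t0 := Ioo_mem_nhdsGT_of_mem ⟨le_rfl, ht0b⟩
    have hRh : R.IsHermitian := by
      refine Matrix.ext fun i j => ?_
      have h1 : Tendsto (fun t => Q t i j) (𝓝[>] t0) (𝓝 (R i j)) := hR i j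
      have h2 : Tendsto (fun t => Q t i j) (𝓝[>] t0) (𝓝 (star (R j i))) := by
        refine Tendsto.congr' ?_ ((continuous_star.tendsto _).comp (hR j i))
        filter_upwards [hmemIoo] with t ht
        have htI : t ∈ I := hsub ⟨hat0.le.trans ht.1.le, ht.2.le⟩
        exact congrFun (congrFun (hQherm t htI).eq i) j
      simpa [Matrix.conjTranspose_apply] using tendsto_nhds_unique h2 h1
    refine posSemidef_iff_dotProduct_mulVec.mpr ⟨(hQherm t0 ht0).sub hRh, fun v => ?_⟩
    rw [Complex.le_def]
    refine ⟨?_, (herm_qf_im ((hQherm t0 ht0).sub hRh) v).symm ▸ rfl⟩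
    have hmono : ∀ᶠ t in 𝓝[>] t0,
        (star v ⬝ᵥ (Q t *ᵥ v)).re - (star v ⬝ᵥ (Q t0 *ᵥ v)).re
          ≤ (star v ⬝ᵥ (matInt G t0 t *ᵥ v)).re := by
      filter_upwards [hmemIoo] with t ht
      have h := (posSemidef_iff_dotProduct_mulVec.mp (hGle t0 t hat0.le ht.1.le ht.2.le)).2 v
      have h0 := (Complex.le_def.mp h).1
      simp only [Matrix.sub_mulVec, dotProduct_sub, Complex.sub_re, Complex.zero_re] at h0
      linarith
    have hA : Tendsto (fun t => (star v ⬝ᵥ (Q t *ᵥ v)).re - (star v ⬝ᵥ (Q t0 *ᵥ v)).re)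
        (𝓝[>] t0) (𝓝 ((star v ⬝ᵥ (R *ᵥ v)).re - (star v ⬝ᵥ (Q t0 *ᵥ v)).re)) :=
      ((Complex.continuous_re.tendsto _).comp (qf_tendsto hR v)).sub tendsto_const_nhds
    have hB : Tendsto (fun t => (star v ⬝ᵥ (matInt G t0 t *ᵥ v)).re) (𝓝[>] t0) (𝓝 0) := by
      have hIJ : ∀ i j, Tendsto (fun t => matInt G t0 t i j) (𝓝[>] t0)
          (𝓝 ((0 : Matrix (Fin n) (Fin n) ℂ) i j)) := by
        intro i j
        have hint : IntegrableOn (fun s => G s i j) (uIcc t0 b) :=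
          (hGint i j).mono_set (by
            rw [uIcc_of_le ht0b.le]; exact Icc_subset_Icc hat0.le le_rfl)
        have hcont := intervalIntegral.continuousOn_primitive_interval hint
        have htd : Tendsto (fun x => ∫ s in t0..x, G s i j) (𝓝[uIcc t0 b] t0)
            (𝓝 (∫ s in t0..t0, G s i j)) := hcont t0 left_mem_uIcc
        rw [intervalIntegral.integral_same] at htd
        have hle : 𝓝[>] t0 ≤ 𝓝[uIcc t0 b] t0 := nhdsWithin_le_iff.mpr
          (mem_of_superset hmemIoo (by
            rw [uIcc_of_le ht0b.le]; exact Ioo_subset_Icc_self))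
        simpa [matInt, Matrix.zero_apply] using htd.mono_left hle
      have := (Complex.continuous_re.tendsto _).comp (qf_tendsto hIJ v)
      simpa [Function.comp_def] using this
    have hfinal := le_of_tendsto_of_tendsto hA hB hmono
    simp only [Matrix.sub_mulVec, dotProduct_sub, Complex.sub_re, Complex.zero_re]
    linarith

end Paper
end

section
/- Let n, m ∈ ℕ, let [a,b] ⊆ ℝ be a compact interval, let Q : [a,b] → ℂ^{n×n} be pointwise Hermitian and absolutely upper semicontinuous on [a,b], and let V : [a,b] → ℂ^{n×m} be absolutely continuous, i.e., there exists a Bochner-integrable W : [a,b] → ℂ^{n×m} with V(t) = V(a) + ∫_a^t W(τ) dτ for all t ∈ [a,b]. Then the pointwise Hermitian matrix function Q̃ : [a,b] → ℂ^{m×m}, Q̃(t) = V(t)* Q(t) V(t), is absolutely upper semicontinuous on [a,b]. Moreover, if Q(t) is positive semidefinite for every t, then Q̃(t) is positive semidefinite for every t. -/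
open MeasureTheory Matrix Set Filter Topology
open scoped ComplexOrder ENNReal

namespace Paper

noncomputable def vsum {k : ℕ} (x : Fin k → ℂ) : ℝ := ∑ i, ‖x i‖
noncomputable def msum {k l : ℕ} (M : Matrix (Fin k) (Fin l) ℂ) : ℝ := ∑ i, ∑ j, ‖M i j‖

lemma vsum_nonneg {k : ℕ} (x : Fin k → ℂ) : 0 ≤ vsum x :=
  Finset.sum_nonneg fun _ _ => norm_nonneg _

lemma msum_nonneg {k l : ℕ} (M : Matrix (Fin k) (Fin l) ℂ) : 0 ≤ msum M :=
  Finset.sum_nonneg fun _ _ => Finset.sum_nonneg fun _ _ => norm_nonneg _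

lemma norm_le_vsum {k : ℕ} (x : Fin k → ℂ) (i : Fin k) : ‖x i‖ ≤ vsum x :=
  Finset.single_le_sum (fun _ _ => norm_nonneg _) (Finset.mem_univ i)

lemma norm_le_msum {k l : ℕ} (M : Matrix (Fin k) (Fin l) ℂ) (i : Fin k) (j : Fin l) :
    ‖M i j‖ ≤ msum M := by
  refine le_trans (Finset.single_le_sum (fun _ _ => norm_nonneg _) (Finset.mem_univ j)) ?_
  exact Finset.single_le_sum (f := fun i => ∑ j, ‖M i j‖)
    (fun _ _ => Finset.sum_nonneg fun _ _ => norm_nonneg _) (Finset.mem_univ i)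

lemma vsum_add_le {k : ℕ} (x y : Fin k → ℂ) : vsum (x + y) ≤ vsum x + vsum y := by
  rw [vsum, vsum, vsum, ← Finset.sum_add_distrib]
  exact Finset.sum_le_sum fun i _ => norm_add_le _ _

lemma msum_add_le {k l : ℕ} (M N : Matrix (Fin k) (Fin l) ℂ) :
    msum (M + N) ≤ msum M + msum N := by
  rw [msum, msum, msum, ← Finset.sum_add_distrib]
  refine Finset.sum_le_sum fun i _ => ?_
  rw [← Finset.sum_add_distrib]
  exact Finset.sum_le_sum fun j _ => norm_add_le _ _

lemma norm_bilin_le {k l : ℕ} (M : Matrix (Fin k) (Fin l) ℂ) (v : Fin k → ℂ) (w : Fin l → ℂ) :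
    ‖star v ⬝ᵥ (M *ᵥ w)‖ ≤ msum M * (vsum v * vsum w) := by
  have h : star v ⬝ᵥ (M *ᵥ w) = ∑ i, ∑ j, star (v i) * (M i j * w j) := by
    simp [dotProduct, mulVec, Finset.mul_sum]
  rw [h]
  calc ‖∑ i, ∑ j, star (v i) * (M i j * w j)‖
      ≤ ∑ i, ∑ j, ‖star (v i) * (M i j * w j)‖ := by
        refine le_trans (norm_sum_le _ _) (Finset.sum_le_sum fun i _ => norm_sum_le _ _)
    _ ≤ ∑ i, ∑ j, ‖M i j‖ * (vsum v * vsum w) := by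
        refine Finset.sum_le_sum fun i _ => Finset.sum_le_sum fun j _ => ?_
        rw [norm_mul, norm_mul, norm_star]
        calc ‖v i‖ * (‖M i j‖ * ‖w j‖) = ‖M i j‖ * (‖v i‖ * ‖w j‖) := by ring
          _ ≤ ‖M i j‖ * (vsum v * vsum w) := by
              refine mul_le_mul_of_nonneg_left ?_ (norm_nonneg _)
              exact mul_le_mul (norm_le_vsum v i) (norm_le_vsum w j) (norm_nonneg _)
                (vsum_nonneg v)
    _ = msum M * (vsum v * vsum w) := by rw [msum, Finset.sum_mul]; simp [Finset.sum_mul]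

lemma re_bilin_le {k l : ℕ} (M : Matrix (Fin k) (Fin l) ℂ) (v : Fin k → ℂ) (w : Fin l → ℂ) :
    (star v ⬝ᵥ (M *ᵥ w)).re ≤ msum M * (vsum v * vsum w) := by
  refine le_trans ?_ (norm_bilin_le M v w)
  exact le_trans (le_abs_self _) (Complex.abs_re_le_norm _)

lemma neg_re_bilin_le {k l : ℕ} (M : Matrix (Fin k) (Fin l) ℂ) (v : Fin k → ℂ) (w : Fin l → ℂ) :
    -(msum M * (vsum v * vsum w)) ≤ (star v ⬝ᵥ (M *ᵥ w)).re := by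
  rw [neg_le]
  refine le_trans ?_ (norm_bilin_le M v w)
  exact le_trans (neg_le_abs _) (Complex.abs_re_le_norm _)

lemma vsum_mulVec_le {k l : ℕ} (M : Matrix (Fin k) (Fin l) ℂ) (x : Fin l → ℂ) :
    vsum (M *ᵥ x) ≤ msum M * vsum x := by
  calc vsum (M *ᵥ x) = ∑ i, ‖∑ j, M i j * x j‖ := by simp [vsum, mulVec, dotProduct]
    _ ≤ ∑ i, ∑ j, ‖M i j * x j‖ := Finset.sum_le_sum fun i _ => norm_sum_le _ _
    _ ≤ ∑ i, ∑ j, ‖M i j‖ * vsum x := by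
        refine Finset.sum_le_sum fun i _ => Finset.sum_le_sum fun j _ => ?_
        rw [norm_mul]
        exact mul_le_mul_of_nonneg_left (norm_le_vsum x j) (norm_nonneg _)
    _ = msum M * vsum x := by rw [msum, Finset.sum_mul]; simp [Finset.sum_mul]

lemma intervalIntegrable_of_Icc {E : Type*} [NormedAddCommGroup E] {f : ℝ → E} {a b r s : ℝ}
    (hr : r ∈ Icc a b) (hs : s ∈ Icc a b) (hrs : r ≤ s)
    (hf : IntegrableOn f (Icc a b)) : IntervalIntegrable f volume r s := by
  rw [intervalIntegrable_iff_integrableOn_Icc_of_le hrs]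
  exact hf.mono_set (Icc_subset_Icc hr.1 hs.2)

lemma msum_matInt_le {k l : ℕ} {F : ℝ → Matrix (Fin k) (Fin l) ℂ} {a b r s : ℝ}
    (hF : ∀ i j, IntegrableOn (fun t => F t i j) (Icc a b))
    (hr : r ∈ Icc a b) (hs : s ∈ Icc a b) (hrs : r ≤ s) :
    msum (matInt F r s) ≤ ∫ t in r..s, msum (F t) := by
  have hInt : ∀ i j, IntervalIntegrable (fun t => F t i j) volume r s :=
    fun i j => intervalIntegrable_of_Icc hr hs hrs (hF i j)
  calc msum (matInt F r s) = ∑ i, ∑ j, ‖∫ t in r..s, F t i j‖ := rfl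
    _ ≤ ∑ i, ∑ j, ∫ t in r..s, ‖F t i j‖ := by
        refine Finset.sum_le_sum fun i _ => Finset.sum_le_sum fun j _ => ?_
        exact intervalIntegral.norm_integral_le_integral_norm hrs
    _ = ∫ t in r..s, msum (F t) := by
        have h1 : ∀ i : Fin k, (∫ t in r..s, ∑ j, ‖F t i j‖) = ∑ j, ∫ t in r..s, ‖F t i j‖ :=
          fun i => intervalIntegral.integral_finset_sum (fun j _ => (hInt i j).norm)
        have h2 : (∫ t in r..s, ∑ i, ∑ j, ‖F t i j‖) = ∑ i, ∫ t in r..s, ∑ j, ‖F t i j‖ :=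
          intervalIntegral.integral_finset_sum (fun i _ => intervalIntegrable_of_Icc hr hs hrs
            (integrable_finset_sum _ fun j _ => (hF i j).norm))
        simp only [msum]
        rw [h2]
        exact Finset.sum_congr rfl fun i _ => (h1 i).symm

lemma integrableOn_msum {k l : ℕ} {F : ℝ → Matrix (Fin k) (Fin l) ℂ} {a b : ℝ}
    (hF : ∀ i j, IntegrableOn (fun t => F t i j) (Icc a b)) :
    IntegrableOn (fun t => msum (F t)) (Icc a b) := by
  unfold msum
  exact integrable_finset_sum _ fun i _ => integrable_finset_sum _ fun j _ => (hF i j).norm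

lemma quad_star_eq {k : ℕ} {M : Matrix (Fin k) (Fin k) ℂ} (hM : M.IsHermitian) (x : Fin k → ℂ) :
    (starRingEnd ℂ) (star x ⬝ᵥ (M *ᵥ x)) = star x ⬝ᵥ (M *ᵥ x) := by
  have h1 : star x ⬝ᵥ (M *ᵥ x) = star (star (M *ᵥ x) ⬝ᵥ x) := star_dotProduct _ _
  have h2 : star (M *ᵥ x) ⬝ᵥ x = star x ⬝ᵥ (M *ᵥ x) := by
    rw [star_mulVec, hM.eq, ← dotProduct_mulVec]
  conv_rhs => rw [h1, h2]
  rfl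

lemma quad_im_zero {k : ℕ} {M : Matrix (Fin k) (Fin k) ℂ} (hM : M.IsHermitian) (x : Fin k → ℂ) :
    (star x ⬝ᵥ (M *ᵥ x)).im = 0 :=
  Complex.conj_eq_iff_im.mp (quad_star_eq hM x)

lemma posSemidef_of_re {k : ℕ} {M : Matrix (Fin k) (Fin k) ℂ} (hM : M.IsHermitian)
    (h : ∀ x : Fin k → ℂ, 0 ≤ (star x ⬝ᵥ (M *ᵥ x)).re) : M.PosSemidef :=
  PosSemidef.of_dotProduct_mulVec_nonneg hM fun x => Complex.nonneg_iff.mpr ⟨h x, (quad_im_zero hM x).symm⟩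

lemma quad_congr_eq {n m : ℕ} (Vm : Matrix (Fin n) (Fin m) ℂ) (Qm : Matrix (Fin n) (Fin n) ℂ)
    (x : Fin m → ℂ) :
    star x ⬝ᵥ ((Vmᴴ * Qm * Vm) *ᵥ x) = star (Vm *ᵥ x) ⬝ᵥ (Qm *ᵥ (Vm *ᵥ x)) := by
  rw [star_mulVec, dotProduct_mulVec (star x ᵥ* Vmᴴ), vecMul_vecMul, ← dotProduct_mulVec,
    mulVec_mulVec]

lemma quad_smul_one_re {k : ℕ} (c : ℝ) (x : Fin k → ℂ) :
    (star x ⬝ᵥ ((((c : ℂ) • (1 : Matrix (Fin k) (Fin k) ℂ))) *ᵥ x)).re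
      = c * ∑ i, ‖x i‖ ^ 2 := by
  have h : star x ⬝ᵥ (((c : ℂ) • (1 : Matrix (Fin k) (Fin k) ℂ)) *ᵥ x)
      = (c : ℂ) * (star x ⬝ᵥ x) := by
    rw [smul_mulVec, one_mulVec, dotProduct_smul, smul_eq_mul]
  rw [h]
  have h2 : star x ⬝ᵥ x = ((∑ i, ‖x i‖ ^ 2 : ℝ) : ℂ) := by
    rw [dotProduct]
    push_cast
    refine Finset.sum_congr rfl fun i _ => ?_
    rw [Pi.star_apply, RCLike.star_def, mul_comm, Complex.mul_conj]
    simp [Complex.normSq_eq_norm_sq]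
  rw [h2, ← Complex.ofReal_mul, Complex.ofReal_re]

lemma vsum_sq_le {k : ℕ} (x : Fin k → ℂ) : (vsum x) ^ 2 ≤ (k : ℝ) * ∑ i, ‖x i‖ ^ 2 := by
  have := sq_sum_le_card_mul_sum_sq (s := (Finset.univ : Finset (Fin k)))
    (f := fun i => ‖x i‖)
  simpa [vsum] using this

lemma vsum_single {k : ℕ} (i : Fin k) (c : ℂ) : vsum (Pi.single i c) = ‖c‖ := by
  rw [vsum]
  rw [Finset.sum_eq_single i (fun l _ hl => by simp [Pi.single_apply, hl])
    (fun h => absurd (Finset.mem_univ i) h)]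
  simp

lemma loewner_re_le {k : ℕ} {M N : Matrix (Fin k) (Fin k) ℂ} (h : LoewnerLE M N)
    (x : Fin k → ℂ) :
    (star x ⬝ᵥ (M *ᵥ x)).re ≤ (star x ⬝ᵥ (N *ᵥ x)).re := by
  have h2 := h.dotProduct_mulVec_nonneg x
  have hre := (Complex.nonneg_iff.mp h2).1
  rw [Matrix.sub_mulVec, dotProduct_sub, Complex.sub_re] at hre
  linarith

lemma quad_pair {k : ℕ} (M : Matrix (Fin k) (Fin k) ℂ) (i j : Fin k) (μ : ℂ) :
    star (Pi.single i 1 + Pi.single j μ) ⬝ᵥ (M *ᵥ (Pi.single i 1 + Pi.single j μ))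
      = M i i + μ * M i j + star μ * M j i + star μ * μ * M j j := by
  have hs : star (Pi.single i (1 : ℂ) + Pi.single j μ)
      = (Pi.single i 1 + Pi.single j (star μ) : Fin k → ℂ) := by
    funext l
    by_cases hl : l = i <;> by_cases hl2 : l = j <;>
      simp [Pi.star_apply, Pi.single_apply, hl, hl2, apply_ite (starRingEnd ℂ)]
  rw [hs, mulVec_add, dotProduct_add, add_dotProduct, add_dotProduct, mulVec_single,
    mulVec_single, single_dotProduct, single_dotProduct, single_dotProduct, single_dotProduct]
  simp only [Pi.smul_apply, Matrix.col_apply, MulOpposite.smul_eq_mul_unop, MulOpposite.unop_op]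
  ring

lemma entry_bound {k : ℕ} {M : Matrix (Fin k) (Fin k) ℂ} (hM : M.IsHermitian) {α : ℝ}
    (hup : ∀ x : Fin k → ℂ, (star x ⬝ᵥ (M *ᵥ x)).re ≤ α * vsum x ^ 2)
    (hlo : ∀ x : Fin k → ℂ, -(α * vsum x ^ 2) ≤ (star x ⬝ᵥ (M *ᵥ x)).re) (i j : Fin k) :
    ‖M i j‖ ≤ 6 * α := by
  have hji : star (M i j) = M j i :=
    (M.conjTranspose_apply i j).symm.trans (congrFun (congrFun hM.eq j) i)
  have hdiag : ∀ l : Fin k, |(M l l).re| ≤ α := by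
    intro l
    have hq := quad_pair M l l 0
    simp only [Pi.single_zero, add_zero, zero_mul, mul_zero, star_zero] at hq
    have h1 := hup (Pi.single l 1)
    have h2 := hlo (Pi.single l 1)
    rw [hq, vsum_single] at h1 h2
    simp only [norm_one, one_pow, mul_one] at h1 h2
    rw [abs_le]
    exact ⟨by linarith, h1⟩
  have hα : 0 ≤ α := by linarith [abs_nonneg ((M i i).re), hdiag i]
  have key : ∀ μ : ℂ, ‖μ‖ ≤ 1 →
      |(M i i).re + 2 * (μ * M i j).re + Complex.normSq μ * (M j j).re| ≤ 4 * α := by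
    intro μ hμ
    have hq := quad_pair M i j μ
    have hre : (star (Pi.single i 1 + Pi.single j μ) ⬝ᵥ
        (M *ᵥ (Pi.single i 1 + Pi.single j μ))).re
        = (M i i).re + 2 * (μ * M i j).re + Complex.normSq μ * (M j j).re := by
      rw [hq]
      have h3 : star μ * M j i = star (μ * M i j) := by rw [← hji, star_mul']
      have h4 : star μ * μ * M j j = (Complex.normSq μ : ℂ) * M j j := by
        rw [RCLike.star_def, mul_comm ((starRingEnd ℂ) μ) μ, Complex.mul_conj]
      rw [h3, h4]
      simp only [Complex.add_re, Complex.re_ofReal_mul, RCLike.star_def, Complex.conj_re]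
      ring
    have hx := vsum_add_le (Pi.single i (1 : ℂ)) (Pi.single j μ)
    rw [vsum_single, vsum_single] at hx
    simp only [norm_one] at hx
    have hsq : vsum (Pi.single i (1 : ℂ) + Pi.single j μ) ^ 2 ≤ 4 := by
      nlinarith [vsum_nonneg (Pi.single i (1 : ℂ) + Pi.single j μ)]
    have h1 := hup (Pi.single i 1 + Pi.single j μ)
    have h2 := hlo (Pi.single i 1 + Pi.single j μ)
    rw [hre] at h1 h2
    rw [abs_le]
    constructor <;> nlinarith
  have hre_b : |(M i j).re| ≤ 3 * α := by
    have h := key 1 (by simp)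
    simp only [one_mul, Complex.normSq_one] at h
    have hi := hdiag i
    have hj := hdiag j
    rw [abs_le] at h hi hj ⊢
    constructor <;> [linarith [h.1, h.2]; linarith [h.1, h.2]]
  have him_b : |(M i j).im| ≤ 3 * α := by
    have h := key Complex.I (by simp)
    simp only [Complex.I_mul_re, Complex.normSq_I] at h
    have hi := hdiag i
    have hj := hdiag j
    rw [abs_le] at h hi hj ⊢
    constructor <;> [linarith [h.1, h.2]; linarith [h.1, h.2]]
  calc ‖M i j‖ = ‖M i j‖ := rfl
    _ ≤ |(M i j).re| + |(M i j).im| := Complex.norm_le_abs_re_add_abs_im _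
    _ ≤ 6 * α := by linarith

lemma real_smul_one_isHermitian {k : ℕ} (c : ℝ) :
    (((c : ℂ)) • (1 : Matrix (Fin k) (Fin k) ℂ)).IsHermitian := by
  unfold Matrix.IsHermitian
  rw [Matrix.conjTranspose_smul, Matrix.conjTranspose_one, RCLike.star_def, Complex.conj_ofReal]

set_option maxHeartbeats 1000000 in
/-- AUC matrix functions are closed under congruence with absolutely
continuous matrix functions, and positive semidefiniteness is preserved. -/
theorem statement4 {n m : ℕ} (a b : ℝ) (hab : a ≤ b)
    (Q : ℝ → Matrix (Fin n) (Fin n) ℂ) (hQherm : ∀ t ∈ Icc a b, (Q t).IsHermitian)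
    (hQ : IsAUCOn Q a b)
    (V W : ℝ → Matrix (Fin n) (Fin m) ℂ)
    (hW : ∀ i j, IntegrableOn (fun t => W t i j) (Icc a b))
    (hV : ∀ t ∈ Icc a b, V t = V a + matInt W a t) :
    (∀ t ∈ Icc a b, ((V t)ᴴ * Q t * V t).IsHermitian) ∧
    IsAUCOn (fun t => (V t)ᴴ * Q t * V t) a b ∧
    ((∀ t ∈ Icc a b, (Q t).PosSemidef) →
      ∀ t ∈ Icc a b, ((V t)ᴴ * Q t * V t).PosSemidef) := by
  have haI : a ∈ Icc a b := left_mem_Icc.mpr hab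
  have hbI : b ∈ Icc a b := right_mem_Icc.mpr hab
  have hherm : ∀ t ∈ Icc a b, ((V t)ᴴ * Q t * V t).IsHermitian :=
    fun t ht => isHermitian_conjTranspose_mul_mul (V t) (hQherm t ht)
  refine ⟨hherm, ?_, fun hpsd t ht => (hpsd t ht).conjTranspose_mul_mul_same (V t)⟩
  obtain ⟨G, hGherm, hGint, hGle⟩ := hQ
  have hNGint : IntegrableOn (fun t => msum (G t)) (Icc a b) := integrableOn_msum hGint
  have hNWint : IntegrableOn (fun t => msum (W t)) (Icc a b) := integrableOn_msum hW
  -- monotonicity of integrals of nonnegative functions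
  have hmono : ∀ f : ℝ → ℝ, IntegrableOn f (Icc a b) → (∀ t, 0 ≤ f t) →
      ∀ r s : ℝ, r ∈ Icc a b → s ∈ Icc a b → r ≤ s →
      (∫ t in r..s, f t) ≤ ∫ t in a..b, f t := by
    intro f hf hnn r s hr hs hrs
    have har : IntervalIntegrable f volume a r := intervalIntegrable_of_Icc haI hr hr.1 hf
    have hrs' : IntervalIntegrable f volume r s := intervalIntegrable_of_Icc hr hs hrs hf
    have hsb : IntervalIntegrable f volume s b := intervalIntegrable_of_Icc hs hbI hs.2 hf
    have e : (∫ t in a..b, f t)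
        = ((∫ t in a..r, f t) + (∫ t in r..s, f t)) + (∫ t in s..b, f t) := by
      rw [intervalIntegral.integral_add_adjacent_intervals har hrs',
        intervalIntegral.integral_add_adjacent_intervals (har.trans hrs') hsb]
    have n1 : 0 ≤ ∫ t in a..r, f t := intervalIntegral.integral_nonneg hr.1 fun u _ => hnn u
    have n3 : 0 ≤ ∫ t in s..b, f t := intervalIntegral.integral_nonneg hs.2 fun u _ => hnn u
    linarith
  set IG : ℝ := ∫ t in a..b, msum (G t) with hIGdef
  set IW : ℝ := ∫ t in a..b, msum (W t) with hIWdef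
  have hIG0 : 0 ≤ IG := intervalIntegral.integral_nonneg hab fun u _ => msum_nonneg _
  have hIW0 : 0 ≤ IW := intervalIntegral.integral_nonneg hab fun u _ => msum_nonneg _
  set cV : ℝ := msum (V a) + IW with hcVdef
  have hcV : ∀ t ∈ Icc a b, msum (V t) ≤ cV := by
    intro t ht
    rw [hV t ht]
    refine le_trans (msum_add_le _ _) ?_
    have h1 := msum_matInt_le hW haI ht ht.1
    have h2 := hmono _ hNWint (fun u => msum_nonneg _) a t haI ht ht.1
    rw [hcVdef]
    linarith
  have hcV0 : 0 ≤ cV := le_trans (msum_nonneg (V a)) (hcV a haI)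
  set α : ℝ := msum (Q a) + msum (Q b) + IG with hαdef
  have hα0 : 0 ≤ α := by
    have := msum_nonneg (Q a); have := msum_nonneg (Q b); rw [hαdef]; linarith
  -- uniform quadratic-form bounds on Q
  have hquadQ : ∀ r ∈ Icc a b, ∀ x : Fin n → ℂ,
      (star x ⬝ᵥ (Q r *ᵥ x)).re ≤ α * vsum x ^ 2 ∧
      -(α * vsum x ^ 2) ≤ (star x ⬝ᵥ (Q r *ᵥ x)).re := by
    intro r hr x
    have hsq0 : (0:ℝ) ≤ vsum x ^ 2 := sq_nonneg _
    have hxx : vsum x * vsum x = vsum x ^ 2 := (sq (vsum x)).symm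
    constructor
    · have h1 := loewner_re_le (hGle a r le_rfl hr.1 hr.2) x
      rw [Matrix.sub_mulVec, dotProduct_sub, Complex.sub_re] at h1
      have h2 := re_bilin_le (Q a) x x
      have h3 := re_bilin_le (matInt G a r) x x
      have hms : msum (matInt G a r) ≤ IG :=
        le_trans (msum_matInt_le hGint haI hr hr.1)
          (hmono _ hNGint (fun u => msum_nonneg _) a r haI hr hr.1)
      have h4 : msum (matInt G a r) * (vsum x * vsum x) ≤ IG * (vsum x ^ 2) := by
        rw [hxx]; exact mul_le_mul_of_nonneg_right hms hsq0
      have h5 : 0 ≤ msum (Q b) * vsum x ^ 2 := mul_nonneg (msum_nonneg _) hsq0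
      rw [hαdef]
      nlinarith [h2, h3]
    · have h1 := loewner_re_le (hGle r b hr.1 hr.2 le_rfl) x
      rw [Matrix.sub_mulVec, dotProduct_sub, Complex.sub_re] at h1
      have h2 := neg_re_bilin_le (Q b) x x
      have h3 := re_bilin_le (matInt G r b) x x
      have hms : msum (matInt G r b) ≤ IG :=
        le_trans (msum_matInt_le hGint hr hbI hr.2)
          (hmono _ hNGint (fun u => msum_nonneg _) r b hr hbI hr.2)
      have h4 : msum (matInt G r b) * (vsum x * vsum x) ≤ IG * (vsum x ^ 2) := by
        rw [hxx]; exact mul_le_mul_of_nonneg_right hms hsq0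
      have h5 : 0 ≤ msum (Q a) * vsum x ^ 2 := mul_nonneg (msum_nonneg _) hsq0
      rw [hαdef]
      nlinarith [h2, h3]
  -- uniform entrywise bound on Q, hence on msum (Q r)
  set β : ℝ := (n : ℝ) * ((n : ℝ) * (6 * α)) with hβdef
  have hβ0 : 0 ≤ β := by positivity
  have hQm : ∀ r ∈ Icc a b, msum (Q r) ≤ β := by
    intro r hr
    have hb : ∀ i j : Fin n, ‖Q r i j‖ ≤ 6 * α :=
      entry_bound (hQherm r hr) (fun x => (hquadQ r hr x).1) (fun x => (hquadQ r hr x).2)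
    have : msum (Q r) ≤ ∑ _i : Fin n, ∑ _j : Fin n, 6 * α :=
      Finset.sum_le_sum fun i _ => Finset.sum_le_sum fun j _ => hb i j
    rw [hβdef]
    simpa [Finset.sum_const, Finset.card_univ, nsmul_eq_mul, mul_assoc] using this
  -- the dominating integrand
  set g : ℝ → ℝ := fun t => (cV ^ 2 * msum (G t) + 2 * β * cV * msum (W t)) * m with hgdef
  have hgint : IntegrableOn g (Icc a b) :=
    ((hNGint.const_mul _).add (hNWint.const_mul _)).mul_const _
  refine ⟨fun t => ((g t : ℝ) : ℂ) • (1 : Matrix (Fin m) (Fin m) ℂ),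
    fun t => real_smul_one_isHermitian _, ?_, ?_⟩
  · intro i j
    by_cases hij : i = j
    · subst hij
      have he : (fun t => (((g t : ℝ) : ℂ) • (1 : Matrix (Fin m) (Fin m) ℂ)) i i)
          = fun t => ((g t : ℝ) : ℂ) := by
        funext t; simp [Matrix.smul_apply, Matrix.one_apply_eq]
      rw [he]
      exact hgint.ofReal
    · have he : (fun t => (((g t : ℝ) : ℂ) • (1 : Matrix (Fin m) (Fin m) ℂ)) i j)
          = fun _ => (0 : ℂ) := by
        funext t; simp [Matrix.smul_apply, Matrix.one_apply, hij]
      rw [he]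
      exact integrable_zero _ _ _
  · intro r s har hrs hsb
    have hrI : r ∈ Icc a b := ⟨har, hrs.trans hsb⟩
    have hsI : s ∈ Icc a b := ⟨har.trans hrs, hsb⟩
    have hmat : matInt (fun t => ((g t : ℝ) : ℂ) • (1 : Matrix (Fin m) (Fin m) ℂ)) r s
        = (((∫ t in r..s, g t : ℝ) : ℂ)) • (1 : Matrix (Fin m) (Fin m) ℂ) := by
      ext i j
      by_cases hij : i = j
      · subst hij
        simp only [matInt, Matrix.of_apply, Matrix.smul_apply, Matrix.one_apply_eq,
          smul_eq_mul, mul_one]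
        exact intervalIntegral.integral_ofReal
      · simp [matInt, Matrix.smul_apply, Matrix.one_apply, hij]
    rw [LoewnerLE, hmat]
    refine posSemidef_of_re (((real_smul_one_isHermitian _).sub
      (((hherm s hsI).sub (hherm r hrI))))) ?_
    intro x
    rw [Matrix.sub_mulVec, dotProduct_sub, Complex.sub_re, Matrix.sub_mulVec, dotProduct_sub,
      Complex.sub_re, quad_smul_one_re, quad_congr_eq, quad_congr_eq]
    set us : Fin n → ℂ := V s *ᵥ x with husdef
    set ur : Fin n → ℂ := V r *ᵥ x with hurdef
    set d : Fin n → ℂ := matInt W r s *ᵥ x with hddef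
    have hd : us - ur = d := by
      have hVdiff : V s - V r = matInt W r s := by
        ext i j
        rw [hV s hsI, hV r hrI]
        simp only [Matrix.sub_apply, Matrix.add_apply, matInt, Matrix.of_apply]
        have : V a i j + (∫ t in a..s, W t i j) - (V a i j + ∫ t in a..r, W t i j)
            = (∫ t in a..s, W t i j) - ∫ t in a..r, W t i j := by ring
        rw [this]
        exact intervalIntegral.integral_interval_sub_left
          (intervalIntegrable_of_Icc haI hsI hsI.1 (hW i j))
          (intervalIntegrable_of_Icc haI hrI hrI.1 (hW i j))
      rw [husdef, hurdef, hddef, ← Matrix.sub_mulVec, hVdiff]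
    have iden : star us ⬝ᵥ (Q s *ᵥ us) - star ur ⬝ᵥ (Q r *ᵥ ur)
        = star us ⬝ᵥ ((Q s - Q r) *ᵥ us)
          + (star us ⬝ᵥ (Q r *ᵥ d) + star d ⬝ᵥ (Q r *ᵥ ur)) := by
      rw [← hd, Matrix.sub_mulVec, Matrix.mulVec_sub, star_sub, dotProduct_sub, dotProduct_sub,
        sub_dotProduct]
      ring
    -- nonnegativity and size facts
    have hNGrs0 : 0 ≤ ∫ t in r..s, msum (G t) :=
      intervalIntegral.integral_nonneg hrs fun u _ => msum_nonneg _
    have hNWrs0 : 0 ≤ ∫ t in r..s, msum (W t) :=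
      intervalIntegral.integral_nonneg hrs fun u _ => msum_nonneg _
    have hvx0 : 0 ≤ vsum x := vsum_nonneg x
    have hus : vsum us ≤ cV * vsum x :=
      le_trans (vsum_mulVec_le _ _) (mul_le_mul_of_nonneg_right (hcV s hsI) hvx0)
    have hur : vsum ur ≤ cV * vsum x :=
      le_trans (vsum_mulVec_le _ _) (mul_le_mul_of_nonneg_right (hcV r hrI) hvx0)
    have hdv : vsum d ≤ (∫ t in r..s, msum (W t)) * vsum x :=
      le_trans (vsum_mulVec_le _ _)
        (mul_le_mul_of_nonneg_right (msum_matInt_le hW hrI hsI hrs) hvx0)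
    have hus0 : 0 ≤ vsum us := vsum_nonneg _
    have hur0 : 0 ≤ vsum ur := vsum_nonneg _
    have hdv0 : 0 ≤ vsum d := vsum_nonneg _
    -- bound the three terms
    have hcvx0 : 0 ≤ cV * vsum x := mul_nonneg hcV0 hvx0
    have b1 : (star us ⬝ᵥ ((Q s - Q r) *ᵥ us)).re
        ≤ (∫ t in r..s, msum (G t)) * ((cV * vsum x) * (cV * vsum x)) := by
      have le1 := loewner_re_le (hGle r s har hrs hsb) us
      have le2 := re_bilin_le (matInt G r s) us us
      have le3 : msum (matInt G r s) ≤ ∫ t in r..s, msum (G t) :=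
        msum_matInt_le hGint hrI hsI hrs
      have e1 : vsum us * vsum us ≤ (cV * vsum x) * (cV * vsum x) :=
        mul_le_mul hus hus hus0 hcvx0
      have e2 : msum (matInt G r s) * (vsum us * vsum us)
          ≤ (∫ t in r..s, msum (G t)) * ((cV * vsum x) * (cV * vsum x)) :=
        mul_le_mul le3 e1 (mul_nonneg hus0 hus0) hNGrs0
      linarith
    have b2 : (star us ⬝ᵥ (Q r *ᵥ d)).re
        ≤ β * ((cV * vsum x) * ((∫ t in r..s, msum (W t)) * vsum x)) := by
      have le1 := re_bilin_le (Q r) us d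
      have le2 := hQm r hrI
      have e1 : vsum us * vsum d ≤ (cV * vsum x) * ((∫ t in r..s, msum (W t)) * vsum x) :=
        mul_le_mul hus hdv hdv0 hcvx0
      have e2 : msum (Q r) * (vsum us * vsum d)
          ≤ β * ((cV * vsum x) * ((∫ t in r..s, msum (W t)) * vsum x)) :=
        mul_le_mul le2 e1 (mul_nonneg hus0 hdv0) hβ0
      linarith
    have b3 : (star d ⬝ᵥ (Q r *ᵥ ur)).re
        ≤ β * ((cV * vsum x) * ((∫ t in r..s, msum (W t)) * vsum x)) := by
      have le1 := re_bilin_le (Q r) d ur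
      have le2 := hQm r hrI
      have e1 : vsum d * vsum ur ≤ ((∫ t in r..s, msum (W t)) * vsum x) * (cV * vsum x) :=
        mul_le_mul hdv hur hur0 (mul_nonneg hNWrs0 hvx0)
      have e2 : msum (Q r) * (vsum d * vsum ur)
          ≤ β * (((∫ t in r..s, msum (W t)) * vsum x) * (cV * vsum x)) :=
        mul_le_mul le2 e1 (mul_nonneg hdv0 hur0) hβ0
      have e3 : β * (((∫ t in r..s, msum (W t)) * vsum x) * (cV * vsum x))
          = β * ((cV * vsum x) * ((∫ t in r..s, msum (W t)) * vsum x)) := by ring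
      linarith
    -- compute the integral of g
    have iNG : IntervalIntegrable (fun t => msum (G t)) volume r s :=
      intervalIntegrable_of_Icc hrI hsI hrs hNGint
    have iNW : IntervalIntegrable (fun t => msum (W t)) volume r s :=
      intervalIntegrable_of_Icc hrI hsI hrs hNWint
    have hgsplit : (∫ t in r..s, g t)
        = (cV ^ 2 * (∫ t in r..s, msum (G t))
            + 2 * β * cV * (∫ t in r..s, msum (W t))) * m := by
      rw [hgdef]
      rw [intervalIntegral.integral_mul_const, intervalIntegral.integral_add
        (iNG.const_mul _) (iNW.const_mul _), intervalIntegral.integral_const_mul,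
        intervalIntegral.integral_const_mul]
    have CS : vsum x ^ 2 ≤ (m : ℝ) * ∑ i, ‖x i‖ ^ 2 := vsum_sq_le x
    have hS0 : 0 ≤ ∑ i, ‖x i‖ ^ 2 := Finset.sum_nonneg fun i _ => sq_nonneg _
    have hre_iden : (star us ⬝ᵥ (Q s *ᵥ us)).re - (star ur ⬝ᵥ (Q r *ᵥ ur)).re
        = (star us ⬝ᵥ ((Q s - Q r) *ᵥ us)).re
          + ((star us ⬝ᵥ (Q r *ᵥ d)).re + (star d ⬝ᵥ (Q r *ᵥ ur)).re) := by
      rw [← Complex.sub_re, iden, Complex.add_re, Complex.add_re]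
    have hring : (∫ t in r..s, msum (G t)) * ((cV * vsum x) * (cV * vsum x))
        + (β * ((cV * vsum x) * ((∫ t in r..s, msum (W t)) * vsum x))
          + β * ((cV * vsum x) * ((∫ t in r..s, msum (W t)) * vsum x)))
        = (cV ^ 2 * (∫ t in r..s, msum (G t))
            + 2 * β * cV * (∫ t in r..s, msum (W t))) * vsum x ^ 2 := by ring
    have total : (star us ⬝ᵥ (Q s *ᵥ us)).re - (star ur ⬝ᵥ (Q r *ᵥ ur)).re
        ≤ (cV ^ 2 * (∫ t in r..s, msum (G t))
            + 2 * β * cV * (∫ t in r..s, msum (W t))) * vsum x ^ 2 := by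
      linarith
    have hC0 : 0 ≤ cV ^ 2 * (∫ t in r..s, msum (G t))
        + 2 * β * cV * (∫ t in r..s, msum (W t)) := by positivity
    have hCS : (cV ^ 2 * (∫ t in r..s, msum (G t))
            + 2 * β * cV * (∫ t in r..s, msum (W t))) * vsum x ^ 2
        ≤ (cV ^ 2 * (∫ t in r..s, msum (G t))
            + 2 * β * cV * (∫ t in r..s, msum (W t))) * ((m : ℝ) * ∑ i, ‖x i‖ ^ 2) :=
      mul_le_mul_of_nonneg_left CS hC0
    have hassoc : ((cV ^ 2 * (∫ t in r..s, msum (G t))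
            + 2 * β * cV * (∫ t in r..s, msum (W t))) * (m : ℝ)) * (∑ i, ‖x i‖ ^ 2)
        = (cV ^ 2 * (∫ t in r..s, msum (G t))
            + 2 * β * cV * (∫ t in r..s, msum (W t))) * ((m : ℝ) * ∑ i, ‖x i‖ ^ 2) := by
      ring
    rw [hgsplit]
    linarith

end Paper
end

section
/- Let n ∈ ℕ, let I ⊆ ℝ be an open interval, and let Q : I → ℂ^{n×n} be pointwise Hermitian. Then Q is weakly decreasing (i.e., Q(t1) ≤ Q(t0) in the Loewner order whenever t0 ≤ t1 in I) if and only if all of the following hold: Q is differentiable at almost every t ∈ I, its a.e. derivative Q̇ is locally Bochner-integrable on I, Q̇(t) ≤ 0 in the Loewner order for almost every t ∈ I, and Q(s) − Q(r) ≤ ∫_r^s Q̇(t) dt for all r ≤ s in I. -/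
open MeasureTheory Matrix Set Filter Topology
open scoped ComplexOrder ENNReal

namespace Paper

open Function

/-! ### Scalar monotone differentiation facts -/

lemma monotone_ae_deriv {f : ℝ → ℝ} (hf : Monotone f) :
    ∃ g : ℝ → ℝ, (∀ᵐ t, HasDerivAt f (g t) t) ∧
      (∀ a b : ℝ, IntegrableOn g (Icc a b)) ∧
      (∀ a b : ℝ, a ≤ b → ∫ t in a..b, g t ≤ f b - f a) := by
  set μ := hf.stieltjesFunction.measure with hμ
  refine ⟨fun x => (μ.rnDeriv volume x).toReal, hf.ae_hasDerivAt, ?_, ?_⟩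
  · intro a b
    exact MeasureTheory.Measure.integrableOn_toReal_rnDeriv
      isCompact_Icc.measure_lt_top.ne
  · intro a b hab
    rcases eq_or_lt_of_le hab with rfl | hab'
    · simp
    rw [intervalIntegral.integral_of_le hab, MeasureTheory.integral_Ioc_eq_integral_Ioo]
    have h1 : ∫ x in Ioo a b, (μ.rnDeriv volume x).toReal ≤ (μ (Ioo a b)).toReal :=
      MeasureTheory.Measure.setIntegral_toReal_rnDeriv_le
        ((measure_mono Ioo_subset_Icc_self).trans_lt isCompact_Icc.measure_lt_top).ne
    refine h1.trans ?_
    have h2 : μ (Ioo a b) = ENNReal.ofReal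
        (leftLim hf.stieltjesFunction b - hf.stieltjesFunction a) :=
      StieltjesFunction.measure_Ioo _
    have key : leftLim hf.stieltjesFunction b - hf.stieltjesFunction a ≤ f b - f a := by
      have hA : leftLim hf.stieltjesFunction b ≤ f b := by
        refine le_of_tendsto (hf.stieltjesFunction.mono.tendsto_leftLim b) ?_
        filter_upwards [self_mem_nhdsWithin] with x (hx : x < b)
        rw [hf.stieltjesFunction_eq]
        exact hf.rightLim_le hx
      have hB : f a ≤ hf.stieltjesFunction a := by
        rw [hf.stieltjesFunction_eq]; exact hf.le_rightLim le_rfl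
      linarith
    rw [h2]
    rw [ENNReal.toReal_ofReal']
    exact max_le key (by linarith [hf hab])

lemma monotoneOn_ae_deriv {f : ℝ → ℝ} {a b : ℝ} (hf : MonotoneOn f (Icc a b)) :
    ∃ g : ℝ → ℝ, (∀ᵐ t, t ∈ Ioo a b → HasDerivAt f (g t) t) ∧
      IntegrableOn g (Icc a b) ∧
      (∀ r s : ℝ, r ∈ Icc a b → s ∈ Icc a b → r ≤ s → ∫ t in r..s, g t ≤ f s - f r) := by
  set π : ℝ → ℝ := fun x => min b (max a x) with hπ
  rcases le_or_gt b a with hba | hab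
  · refine ⟨fun _ => 0, ?_, ?_, ?_⟩
    · filter_upwards with t ht
      exact absurd (ht.1.trans ht.2) (not_lt.2 hba)
    · exact (integrableOn_const_iff (C := (0:ℝ))).2 (Or.inr measure_Icc_lt_top)
    · intro r s hr hs hrs
      have : r = s := le_antisymm hrs (hs.2.trans (hba.trans hr.1))
      subst this; simp [hf hr hr le_rfl]
  · have hπIcc : ∀ x, π x ∈ Icc a b := fun x =>
      ⟨le_min hab.le (le_max_left a x), min_le_left _ _⟩
    have hπid : ∀ x ∈ Icc a b, π x = x := by
      intro x hx
      simp [hπ, max_eq_right hx.1, min_eq_right hx.2]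
    have hπmono : Monotone π := fun x y hxy =>
      min_le_min le_rfl (max_le_max le_rfl hxy)
    have hF : Monotone (f ∘ π) := fun x y hxy =>
      hf (hπIcc x) (hπIcc y) (hπmono hxy)
    obtain ⟨g, hg1, hg2, hg3⟩ := monotone_ae_deriv hF
    refine ⟨g, ?_, hg2 a b, ?_⟩
    · filter_upwards [hg1] with t ht hmem
      refine ht.congr_of_eventuallyEq ?_
      filter_upwards [Ioo_mem_nhds hmem.1 hmem.2] with x hx
      simp [Function.comp, hπid x (Ioo_subset_Icc_self hx)]
    · intro r s hr hs hrs
      have := hg3 r s hrs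
      simp only [Function.comp] at this
      rwa [hπid s hs, hπid r hr] at this

lemma antitoneOn_ae_deriv {f : ℝ → ℝ} {a b : ℝ} (hf : AntitoneOn f (Icc a b)) :
    ∃ g : ℝ → ℝ, (∀ᵐ t, t ∈ Ioo a b → HasDerivAt f (g t) t) ∧
      IntegrableOn g (Icc a b) ∧
      (∀ r s : ℝ, r ∈ Icc a b → s ∈ Icc a b → r ≤ s → f s - f r ≤ ∫ t in r..s, g t) := by
  have hmono : MonotoneOn (fun x => -f x) (Icc a b) := fun x hx y hy hxy =>
    neg_le_neg (hf hx hy hxy)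
  obtain ⟨g, hg1, hg2, hg3⟩ := monotoneOn_ae_deriv hmono
  refine ⟨fun t => -g t, ?_, hg2.neg, ?_⟩
  · filter_upwards [hg1] with t ht hmem
    simpa using (ht hmem).fun_neg
  · intro r s hr hs hrs
    have h := hg3 r s hr hs hrs
    rw [intervalIntegral.integral_neg]
    linarith

lemma hasDerivAt_nonpos_of_antitoneOn {f : ℝ → ℝ} {s : Set ℝ} (hs : IsOpen s)
    (hf : AntitoneOn f s) {t d : ℝ} (ht : t ∈ s) (h : HasDerivAt f d t) : d ≤ 0 := by
  have hsub : Ioi t ⊆ {t}ᶜ := fun x hx => by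
    simp only [Set.mem_compl_iff, Set.mem_singleton_iff]
    exact fun h => absurd (h ▸ hx) (lt_irrefl t)
  have hslope := (hasDerivAt_iff_tendsto_slope.1 h).mono_left
    (nhdsWithin_mono t hsub)
  refine le_of_tendsto hslope ?_
  filter_upwards [self_mem_nhdsWithin, mem_nhdsWithin_of_mem_nhds (hs.mem_nhds ht)]
    with x (hx : t < x) hxs
  rw [slope_def_field]
  have := hf ht hxs hx.le
  have hx' : 0 < x - t := by linarith
  exact div_nonpos_of_nonpos_of_nonneg (by linarith) hx'.le

/-! ### Complex/matrix algebra helpers -/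

lemma star_qq {n : ℕ} (M : Matrix (Fin n) (Fin n) ℂ) (v : Fin n → ℂ) :
    star (star v ⬝ᵥ M *ᵥ v) = star v ⬝ᵥ Mᴴ *ᵥ v := by
  rw [star_dotProduct, star_star, star_mulVec, dotProduct_comm, dotProduct_mulVec]
  rw [dotProduct_comm]

lemma herm_qq_real {n : ℕ} {M : Matrix (Fin n) (Fin n) ℂ} (h : M.IsHermitian)
    (v : Fin n → ℂ) :
    star v ⬝ᵥ M *ᵥ v = (((star v ⬝ᵥ M *ᵥ v).re : ℝ) : ℂ) := by
  have h2 := star_qq M v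
  rw [h.eq] at h2
  rw [Complex.star_def] at h2
  exact (Complex.conj_eq_iff_re.1 h2).symm

lemma qq_pair {n : ℕ} (M : Matrix (Fin n) (Fin n) ℂ) (i j : Fin n) (c : ℂ)
    (v : Fin n → ℂ)
    (hv : v = (Pi.single i (1:ℂ) : Fin n → ℂ) + c • (Pi.single j (1:ℂ) : Fin n → ℂ)) :
    star v ⬝ᵥ M *ᵥ v =
    M i i + c * M i j + star c * M j i + star c * c * M j j := by
  subst hv
  simp [star_add, star_smul, mulVec_add, mulVec_smul, dotProduct_add, add_dotProduct,
    dotProduct_smul, smul_dotProduct, mulVec_single, single_dotProduct,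
    ← Pi.single_star, star_one, smul_eq_mul]
  ring

lemma polar {n : ℕ} (M : Matrix (Fin n) (Fin n) ℂ) (i j : Fin n)
    (v0 v1 v2 v3 : Fin n → ℂ)
    (h0 : v0 = (Pi.single i (1:ℂ) : Fin n → ℂ) + (0:ℂ) • (Pi.single j (1:ℂ) : Fin n → ℂ))
    (h1 : v1 = (Pi.single i (1:ℂ) : Fin n → ℂ) + (1:ℂ) • (Pi.single j (1:ℂ) : Fin n → ℂ))
    (h2 : v2 = (Pi.single i (1:ℂ) : Fin n → ℂ) + Complex.I • (Pi.single j (1:ℂ) : Fin n → ℂ))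
    (h3 : v3 = (Pi.single j (1:ℂ) : Fin n → ℂ) + (0:ℂ) • (Pi.single i (1:ℂ) : Fin n → ℂ)) :
    M i j = ((star v1 ⬝ᵥ M *ᵥ v1 - star v0 ⬝ᵥ M *ᵥ v0 - star v3 ⬝ᵥ M *ᵥ v3)
      - Complex.I * (star v2 ⬝ᵥ M *ᵥ v2 - star v0 ⬝ᵥ M *ᵥ v0 - star v3 ⬝ᵥ M *ᵥ v3)) / 2 := by
  rw [qq_pair M i j 0 v0 h0, qq_pair M i j 1 v1 h1, qq_pair M i j Complex.I v2 h2,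
    qq_pair M j i 0 v3 h3]
  simp only [Complex.star_def, map_zero, _root_.map_one, Complex.conj_I, zero_mul, mul_zero,
    add_zero, one_mul, mul_one]
  field_simp
  ring_nf
  rw [Complex.I_sq]
  ring_nf
  rw [show Complex.I ^ 3 = Complex.I ^ 2 * Complex.I by ring, Complex.I_sq]
  ring

/-! ### Derivative helpers -/

lemma _root_.HasDerivAt.cre {c : ℝ → ℂ} {D : ℂ} {t : ℝ} (h : HasDerivAt c D t) :
    HasDerivAt (fun τ => (c τ).re) D.re t := by
  have := (Complex.reCLM.hasFDerivAt.comp t h.hasFDerivAt).hasDerivAt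
  simp at this
  exact this

lemma _root_.HasDerivAt.cim {c : ℝ → ℂ} {D : ℂ} {t : ℝ} (h : HasDerivAt c D t) :
    HasDerivAt (fun τ => (c τ).im) D.im t := by
  have := (Complex.imCLM.hasFDerivAt.comp t h.hasFDerivAt).hasDerivAt
  simp at this
  exact this

lemma qc_hasDerivAt {n : ℕ} {Q : ℝ → Matrix (Fin n) (Fin n) ℂ}
    {A : Matrix (Fin n) (Fin n) ℂ} {t : ℝ}
    (h : ∀ i j, HasDerivAt (fun τ => Q τ i j) (A i j) t) (v : Fin n → ℂ) :
    HasDerivAt (fun τ => star v ⬝ᵥ Q τ *ᵥ v) (star v ⬝ᵥ A *ᵥ v) t := by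
  have e1 : ∀ (M : Matrix (Fin n) (Fin n) ℂ),
      star v ⬝ᵥ M *ᵥ v = ∑ p : Fin n × Fin n, star (v p.1) * (M p.1 p.2 * v p.2) := by
    intro M
    rw [Fintype.sum_prod_type]
    simp [dotProduct, Matrix.mulVec, Finset.mul_sum]
  simp only [e1]
  exact HasDerivAt.fun_sum fun p _ => ((h p.1 p.2).mul_const (v p.2)).const_mul _


lemma qform_sum {n : ℕ} (M : Matrix (Fin n) (Fin n) ℂ) (v : Fin n → ℂ) :
    star v ⬝ᵥ M *ᵥ v = ∑ p : Fin n × Fin n, star (v p.1) * (M p.1 p.2 * v p.2) := by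
  rw [Fintype.sum_prod_type]
  simp [dotProduct, Matrix.mulVec, Finset.mul_sum]

lemma matInt_qform {n : ℕ} {G : ℝ → Matrix (Fin n) (Fin n) ℂ} {r s : ℝ}
    (hint : ∀ i j, IntervalIntegrable (fun t => G t i j) volume r s) (v : Fin n → ℂ) :
    star v ⬝ᵥ (matInt G r s) *ᵥ v = ∫ t in r..s, star v ⬝ᵥ G t *ᵥ v := by
  simp only [qform_sum]
  rw [intervalIntegral.integral_finset_sum]
  · refine Finset.sum_congr rfl fun p _ => ?_
    rw [intervalIntegral.integral_const_mul, intervalIntegral.integral_mul_const]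
    rfl
  · exact fun p _ => ((hint p.1 p.2).mul_const (v p.2)).const_mul _

lemma qform_integrableOn {n : ℕ} {G : ℝ → Matrix (Fin n) (Fin n) ℂ} {S : Set ℝ}
    (hint : ∀ i j, IntegrableOn (fun t => G t i j) S) (v : Fin n → ℂ) :
    IntegrableOn (fun t => star v ⬝ᵥ G t *ᵥ v) S := by
  simp only [qform_sum]
  exact integrable_finset_sum _ fun p _ => ((hint p.1 p.2).mul_const _).const_mul _

lemma qform_intervalIntegrable {n : ℕ} {G : ℝ → Matrix (Fin n) (Fin n) ℂ} {r s : ℝ}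
    (hint : ∀ i j, IntervalIntegrable (fun t => G t i j) volume r s) (v : Fin n → ℂ) :
    IntervalIntegrable (fun t => star v ⬝ᵥ G t *ᵥ v) volume r s := by
  rw [intervalIntegrable_iff]
  exact qform_integrableOn (fun i j => intervalIntegrable_iff.1 (hint i j)) v

lemma _root_.HasDerivAt.cconj {c : ℝ → ℂ} {D : ℂ} {t : ℝ} (h : HasDerivAt c D t) :
    HasDerivAt (fun τ => (starRingEnd ℂ) (c τ)) ((starRingEnd ℂ) D) t := by
  have key : ∀ z : ℂ, (starRingEnd ℂ) z = ((z.re : ℝ) : ℂ) - Complex.I * ((z.im : ℝ) : ℂ) := by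
    intro z; apply Complex.ext <;> simp
  simp only [key]
  exact (h.cre.ofReal_comp).sub ((h.cim.ofReal_comp).const_mul Complex.I)

noncomputable def qf {n : ℕ} (Q : ℝ → Matrix (Fin n) (Fin n) ℂ) (v : Fin n → ℂ) (τ : ℝ) : ℝ :=
  (star v ⬝ᵥ Q τ *ᵥ v).re

noncomputable def pvec {n : ℕ} (i j : Fin n) (k : Fin 3) : Fin n → ℂ :=
  (Pi.single i (1:ℂ) : Fin n → ℂ) + (![0, 1, Complex.I] k) • (Pi.single j (1:ℂ) : Fin n → ℂ)

lemma pvec0 {n : ℕ} (i j : Fin n) :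
    pvec i j 0 = (Pi.single i (1:ℂ) : Fin n → ℂ) + (0:ℂ) • (Pi.single j (1:ℂ) : Fin n → ℂ) := by
  simp [pvec]

lemma pvec1 {n : ℕ} (i j : Fin n) :
    pvec i j 1 = (Pi.single i (1:ℂ) : Fin n → ℂ) + (1:ℂ) • (Pi.single j (1:ℂ) : Fin n → ℂ) := by
  simp [pvec]

lemma pvec2 {n : ℕ} (i j : Fin n) :
    pvec i j 2 = (Pi.single i (1:ℂ) : Fin n → ℂ) + Complex.I • (Pi.single j (1:ℂ) : Fin n → ℂ) := by
  simp [pvec]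


/-- a pointwise Hermitian `Q` on an open interval is weakly decreasing iff it
is locally AUC (in the a.e.-derivative form) with a.e. nonpositive derivative. -/
theorem statement5 {n : ℕ} (I : Set ℝ) (hIopen : IsOpen I) (hIconn : I.OrdConnected)
    (Q : ℝ → Matrix (Fin n) (Fin n) ℂ) (hQherm : ∀ t ∈ I, (Q t).IsHermitian) :
    (∀ t0 t1 : ℝ, t0 ∈ I → t1 ∈ I → t0 ≤ t1 → LoewnerLE (Q t1) (Q t0)) ↔
    ∃ Q' : ℝ → Matrix (Fin n) (Fin n) ℂ,
      (∀ᵐ t ∂volume, t ∈ I → ∀ i j, HasDerivAt (fun τ => Q τ i j) (Q' t i j) t) ∧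
      (∀ a b : ℝ, a ∈ I → b ∈ I → ∀ i j, IntegrableOn (fun t => Q' t i j) (Icc a b)) ∧
      (∀ᵐ t ∂volume, t ∈ I → LoewnerLE (Q' t) 0) ∧
      ∀ r s : ℝ, r ∈ I → s ∈ I → r ≤ s → LoewnerLE (Q s - Q r) (matInt Q' r s) := by
  constructor
  · -- forward direction
    intro hdec
    classical
    have hreal : ∀ (v : Fin n → ℂ), ∀ τ ∈ I,
        star v ⬝ᵥ Q τ *ᵥ v = ((qf Q v τ : ℝ) : ℂ) :=
      fun v τ hτ => herm_qq_real (hQherm τ hτ) v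
    have hanti : ∀ v : Fin n → ℂ, AntitoneOn (qf Q v) I := by
      intro v x hx y hy hxy
      have hp := (hdec x y hx hy hxy).dotProduct_mulVec_nonneg v
      have he : star v ⬝ᵥ (Q x - Q y) *ᵥ v
          = star v ⬝ᵥ Q x *ᵥ v - star v ⬝ᵥ Q y *ᵥ v := by
        simp [Matrix.sub_mulVec, dotProduct_sub]
      rw [he] at hp
      have h2 := (Complex.le_def.1 hp).1
      simp only [Complex.zero_re, Complex.sub_re] at h2
      simpa [qf] using h2
    set Q' : ℝ → Matrix (Fin n) (Fin n) ℂ :=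
      fun t => Matrix.of fun i j => deriv (fun τ => Q τ i j) t with hQ'def
    -- local construction of an integrable a.e. derivative matrix
    have hloc : ∀ a b : ℝ, a < b → Icc a b ⊆ I →
        ∃ c : ℝ → Matrix (Fin n) (Fin n) ℂ,
          (∀ i j, IntegrableOn (fun t => c t i j) (Icc a b)) ∧
          (∀ᵐ t ∂volume, t ∈ Ioo a b →
            ∀ i j, HasDerivAt (fun τ => Q τ i j) (c t i j) t) := by
      intro a b hab hsub
      have hanti' : ∀ m : Fin n × Fin n × Fin 3,
          AntitoneOn (qf Q (pvec m.1 m.2.1 m.2.2)) (Icc a b) :=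
        fun m => (hanti _).mono hsub
      choose g hg1 hg2 hg3 using fun m : Fin n × Fin n × Fin 3 =>
        antitoneOn_ae_deriv (hanti' m)
      refine ⟨fun t => Matrix.of fun i j =>
        (((g (i,j,1) t - g (i,j,0) t - g (j,i,0) t : ℝ) : ℂ)
          - Complex.I * ((g (i,j,2) t - g (i,j,0) t - g (j,i,0) t : ℝ) : ℂ)) / 2, ?_, ?_⟩
      · intro i j
        apply Integrable.div_const
        exact ((((hg2 (i,j,1)).sub (hg2 (i,j,0))).sub (hg2 (j,i,0))).ofReal).sub
          (((((hg2 (i,j,2)).sub (hg2 (i,j,0))).sub (hg2 (j,i,0))).ofReal).const_mul _)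
      · filter_upwards [ae_all_iff.2 hg1] with t ht hmem i j
        have d1 := ht (i,j,1) hmem
        have d0 := ht (i,j,0) hmem
        have d2 := ht (i,j,2) hmem
        have d3 := ht (j,i,0) hmem
        have hF : HasDerivAt (fun τ =>
            (((qf Q (pvec i j 1) τ - qf Q (pvec i j 0) τ - qf Q (pvec j i 0) τ : ℝ) : ℂ)
              - Complex.I * ((qf Q (pvec i j 2) τ - qf Q (pvec i j 0) τ
                  - qf Q (pvec j i 0) τ : ℝ) : ℂ)) / 2)
            ((((g (i,j,1) t - g (i,j,0) t - g (j,i,0) t : ℝ) : ℂ)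
              - Complex.I * ((g (i,j,2) t - g (i,j,0) t - g (j,i,0) t : ℝ) : ℂ)) / 2) t :=
          ((((d1.sub d0).sub d3).ofReal_comp).sub
            ((((d2.sub d0).sub d3).ofReal_comp).const_mul Complex.I)).div_const 2
        have hev : (fun τ => Q τ i j) =ᶠ[𝓝 t] (fun τ =>
            (((qf Q (pvec i j 1) τ - qf Q (pvec i j 0) τ - qf Q (pvec j i 0) τ : ℝ) : ℂ)
              - Complex.I * ((qf Q (pvec i j 2) τ - qf Q (pvec i j 0) τ
                  - qf Q (pvec j i 0) τ : ℝ) : ℂ)) / 2) := by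
          filter_upwards [Ioo_mem_nhds hmem.1 hmem.2] with τ hτ
          have hτI : τ ∈ I := hsub (Ioo_subset_Icc_self hτ)
          have hpol := polar (Q τ) i j (pvec i j 0) (pvec i j 1) (pvec i j 2) (pvec j i 0)
            (pvec0 i j) (pvec1 i j) (pvec2 i j) (pvec0 j i)
          rw [hpol, hreal _ τ hτI, hreal _ τ hτI, hreal _ τ hτI, hreal _ τ hτI]
          push_cast
          ring
        have hQd : HasDerivAt (fun τ => Q τ i j)
            ((((g (i,j,1) t - g (i,j,0) t - g (j,i,0) t : ℝ) : ℂ)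
              - Complex.I * ((g (i,j,2) t - g (i,j,0) t - g (j,i,0) t : ℝ) : ℂ)) / 2) t :=
          hF.congr_of_eventuallyEq hev
        simpa using hQd
    -- covering of I by rational intervals
    have cover : ∀ t ∈ I, ∃ pq : ℚ × ℚ,
        (((pq.1 : ℝ) < (pq.2 : ℝ) ∧ Icc (pq.1 : ℝ) (pq.2 : ℝ) ⊆ I))
          ∧ t ∈ Ioo (pq.1 : ℝ) (pq.2 : ℝ) := by
      intro t ht
      obtain ⟨ε, hε, hball⟩ := Metric.isOpen_iff.1 hIopen t ht
      obtain ⟨p, hp1, hp2⟩ := exists_rat_btwn (show t - ε < t by linarith)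
      obtain ⟨q, hq1, hq2⟩ := exists_rat_btwn (show t < t + ε by linarith)
      refine ⟨(p, q), ⟨hp2.trans hq1, ?_⟩, hp2, hq1⟩
      intro x hx
      apply hball
      rw [Metric.mem_ball, Real.dist_eq, abs_lt]
      exact ⟨by linarith [hx.1], by linarith [hx.2]⟩
    -- a.e. differentiability on I with derivative Q'
    have main1 : ∀ᵐ t ∂volume, t ∈ I →
        ∀ i j, HasDerivAt (fun τ => Q τ i j) (Q' t i j) t := by
      have haepq : ∀ pq : ℚ × ℚ, ∀ᵐ t ∂volume,
          (((pq.1 : ℝ) < (pq.2 : ℝ) ∧ Icc (pq.1 : ℝ) (pq.2 : ℝ) ⊆ I)) →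
          (t ∈ Ioo (pq.1 : ℝ) (pq.2 : ℝ) →
            ∀ i j, HasDerivAt (fun τ => Q τ i j) (Q' t i j) t) := by
        intro pq
        by_cases hc : ((pq.1 : ℝ) < (pq.2 : ℝ) ∧ Icc (pq.1 : ℝ) (pq.2 : ℝ) ⊆ I)
        · obtain ⟨c, _, hae⟩ := hloc _ _ hc.1 hc.2
          filter_upwards [hae] with t ht _ hmem i j
          have h := ht hmem i j
          have hder : Q' t i j = deriv (fun τ => Q τ i j) t := rfl
          rw [hder, h.deriv]
          exact h
        · filter_upwards with t hcond
          exact absurd hcond hc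
      filter_upwards [ae_all_iff.2 haepq] with t ht htI i j
      obtain ⟨pq, hcond, hmem⟩ := cover t htI
      exact ht pq hcond hmem i j
    -- pointwise consequences at good points
    have mainH : ∀ t ∈ I, (∀ i j, HasDerivAt (fun τ => Q τ i j) (Q' t i j) t) →
        (Q' t).IsHermitian := by
      intro t ht hP
      show (Q' t)ᴴ = Q' t
      ext i j
      rw [Matrix.conjTranspose_apply]
      have h1 : HasDerivAt (fun τ => (starRingEnd ℂ) (Q τ j i))
          ((starRingEnd ℂ) (Q' t j i)) t := (hP j i).cconj
      have h2 : (fun τ => Q τ i j) =ᶠ[𝓝 t] (fun τ => (starRingEnd ℂ) (Q τ j i)) := by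
        filter_upwards [hIopen.mem_nhds ht] with τ hτ
        conv_lhs => rw [← (hQherm τ hτ).eq]
        simp [Matrix.conjTranspose_apply, Complex.star_def]
      have h3 : HasDerivAt (fun τ => Q τ i j) ((starRingEnd ℂ) (Q' t j i)) t :=
        h1.congr_of_eventuallyEq h2
      rw [Complex.star_def]
      exact h3.unique (hP i j)
    have mainN : ∀ t ∈ I, (∀ i j, HasDerivAt (fun τ => Q τ i j) (Q' t i j) t) →
        ∀ v : Fin n → ℂ,
          star v ⬝ᵥ Q' t *ᵥ v = (((star v ⬝ᵥ Q' t *ᵥ v).re : ℝ) : ℂ)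
            ∧ (star v ⬝ᵥ Q' t *ᵥ v).re ≤ 0 := by
      intro t ht hP v
      have hD := qc_hasDerivAt hP v
      have hev : (fun τ => ((qf Q v τ : ℝ) : ℂ)) =ᶠ[𝓝 t]
          (fun τ => star v ⬝ᵥ Q τ *ᵥ v) := by
        filter_upwards [hIopen.mem_nhds ht] with τ hτ
        exact (hreal v τ hτ).symm
      have hD' : HasDerivAt (fun τ => ((qf Q v τ : ℝ) : ℂ)) (star v ⬝ᵥ Q' t *ᵥ v) t :=
        hD.congr_of_eventuallyEq hev
      have hre : HasDerivAt (qf Q v) (star v ⬝ᵥ Q' t *ᵥ v).re t := by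
        have := hD'.cre
        exact this
      have him0 : (star v ⬝ᵥ Q' t *ᵥ v).im = 0 := by
        have h4 := hD'.cim
        have h0 : HasDerivAt (fun τ => (((qf Q v τ : ℝ) : ℂ)).im) 0 t := by
          simp only [Complex.ofReal_im]
          exact hasDerivAt_const t 0
        exact h4.unique h0
      refine ⟨by apply Complex.ext <;> simp [him0], ?_⟩
      exact hasDerivAt_nonpos_of_antitoneOn hIopen (hanti v) ht hre
    -- global integrability
    have hintc : ∀ a b : ℝ, a ∈ I → b ∈ I →
        ∀ i j, IntegrableOn (fun t => Q' t i j) (Icc a b) := by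
      intro a b ha hb i j
      rcases lt_trichotomy a b with hab | rfl | hab
      · have hsub : Icc a b ⊆ I := hIconn.out ha hb
        obtain ⟨c, hcint, hae⟩ := hloc a b hab hsub
        have heq : ∀ᵐ t ∂(volume.restrict (Ioo a b)), c t i j = Q' t i j := by
          filter_upwards [ae_restrict_mem measurableSet_Ioo, ae_restrict_of_ae hae,
            ae_restrict_of_ae main1] with t hmem h1 h2
          exact (h1 hmem i j).unique (h2 (hsub (Ioo_subset_Icc_self hmem)) i j)
        have hIoo : IntegrableOn (fun t => Q' t i j) (Ioo a b) :=
          ((hcint i j).mono_set Ioo_subset_Icc_self).congr heq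
        exact hIoo.congr_set_ae (MeasureTheory.Ioo_ae_eq_Icc).symm
      · rw [Set.Icc_self]
        unfold IntegrableOn
        rw [Measure.restrict_eq_zero.2 (by simp)]
        exact integrable_zero_measure
      · rw [Set.Icc_eq_empty (not_le.2 hab)]
        exact integrableOn_empty
    refine ⟨Q', main1, hintc, ?_, ?_⟩
    · -- a.e. nonpositivity
      filter_upwards [main1] with t hP htI
      have hH := mainH t htI (hP htI)
      have hN := mainN t htI (hP htI)
      refine posSemidef_iff_dotProduct_mulVec.2 ?_
      constructor
      · exact Matrix.isHermitian_zero.sub hH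
      · intro v
        have he : star v ⬝ᵥ ((0 : Matrix (Fin n) (Fin n) ℂ) - Q' t) *ᵥ v
            = -(star v ⬝ᵥ Q' t *ᵥ v) := by
          simp [Matrix.sub_mulVec, Matrix.neg_mulVec, dotProduct_sub, dotProduct_neg]
        rw [he, (hN v).1, ← Complex.ofReal_neg]
        exact Complex.zero_le_real.2 (by linarith [(hN v).2])
    · -- integral inequality
      intro r s hr hs hrs
      rcases eq_or_lt_of_le hrs with rfl | hlt
      · show (matInt Q' r r - (Q r - Q r)).PosSemidef
        have h1 : matInt Q' r r = 0 := by
          ext i j; simp [matInt]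
        rw [h1, sub_self, sub_zero]
        exact Matrix.PosSemidef.zero
      · have hsub : Icc r s ⊆ I := hIconn.out hr hs
        have hii : ∀ i j, IntervalIntegrable (fun t => Q' t i j) volume r s := by
          intro i j
          rw [intervalIntegrable_iff_integrableOn_Ioc_of_le hrs]
          exact (hintc r s hr hs i j).mono_set Ioc_subset_Icc_self
        have hermae : ∀ᵐ t ∂(volume.restrict (Ioc r s)), (Q' t).IsHermitian := by
          filter_upwards [ae_restrict_mem measurableSet_Ioc, ae_restrict_of_ae main1]
            with t hmem hP
          have htI : t ∈ I := hsub ⟨hmem.1.le, hmem.2⟩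
          exact mainH t htI (hP htI)
        have hermInt : (matInt Q' r s).IsHermitian := by
          show (matInt Q' r s)ᴴ = matInt Q' r s
          ext i j
          rw [Matrix.conjTranspose_apply]
          show star (∫ t in r..s, Q' t j i) = ∫ t in r..s, Q' t i j
          rw [intervalIntegral.integral_of_le hrs, intervalIntegral.integral_of_le hrs,
            Complex.star_def, ← integral_conj]
          refine integral_congr_ae ?_
          filter_upwards [hermae] with t hherm
          conv_rhs => rw [← hherm.eq]
          simp [Matrix.conjTranspose_apply, Complex.star_def]
        show (matInt Q' r s - (Q s - Q r)).PosSemidef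
        refine posSemidef_iff_dotProduct_mulVec.2 ?_
        constructor
        · exact hermInt.sub ((hQherm s hs).sub (hQherm r hr))
        · intro v
          have hqi := matInt_qform hii v
          obtain ⟨h, hh1, hh2, hh3⟩ := antitoneOn_ae_deriv ((hanti v).mono hsub)
          have haeeq : ∀ᵐ t ∂(volume.restrict (Ioo r s)),
              star v ⬝ᵥ Q' t *ᵥ v = ((h t : ℝ) : ℂ) := by
            filter_upwards [ae_restrict_mem measurableSet_Ioo, ae_restrict_of_ae main1,
              ae_restrict_of_ae hh1] with t hmem hP hdh
            have htI : t ∈ I := hsub (Ioo_subset_Icc_self hmem)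
            have hD := qc_hasDerivAt (hP htI) v
            have hev : (fun τ => ((qf Q v τ : ℝ) : ℂ)) =ᶠ[𝓝 t]
                (fun τ => star v ⬝ᵥ Q τ *ᵥ v) := by
              filter_upwards [hIopen.mem_nhds htI] with τ hτ
              exact (hreal v τ hτ).symm
            have hD' : HasDerivAt (fun τ => ((qf Q v τ : ℝ) : ℂ))
                (star v ⬝ᵥ Q' t *ᵥ v) t := hD.congr_of_eventuallyEq hev
            have hre : HasDerivAt (qf Q v) (star v ⬝ᵥ Q' t *ᵥ v).re t := by
              have := hD'.cre
              exact this
            have h5 : (star v ⬝ᵥ Q' t *ᵥ v).re = h t := hre.unique (hdh hmem)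
            rw [(mainN t htI (hP htI) v).1, h5]
          have hIeq : ∫ t in r..s, star v ⬝ᵥ Q' t *ᵥ v
              = ((∫ t in r..s, h t : ℝ) : ℂ) := by
            rw [intervalIntegral.integral_of_le hrs,
              intervalIntegral.integral_of_le hrs,
              setIntegral_congr_set (MeasureTheory.Ioo_ae_eq_Ioc).symm,
              setIntegral_congr_set (μ := volume) (f := h) (MeasureTheory.Ioo_ae_eq_Ioc).symm,
              integral_congr_ae haeeq]
            exact integral_ofReal
          have hle : qf Q v s - qf Q v r ≤ ∫ t in r..s, h t :=
            hh3 r s ⟨le_rfl, hrs⟩ ⟨hrs, le_rfl⟩ hrs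
          have hx : star v ⬝ᵥ (matInt Q' r s - (Q s - Q r)) *ᵥ v
              = (((∫ t in r..s, h t) - (qf Q v s - qf Q v r) : ℝ) : ℂ) := by
            have e1 : star v ⬝ᵥ (matInt Q' r s - (Q s - Q r)) *ᵥ v
                = star v ⬝ᵥ matInt Q' r s *ᵥ v
                  - (star v ⬝ᵥ Q s *ᵥ v - star v ⬝ᵥ Q r *ᵥ v) := by
              simp [Matrix.sub_mulVec, dotProduct_sub]
            rw [e1, hqi, hIeq, hreal v s hs, hreal v r hr]
            push_cast
            ring
          rw [hx]
          exact Complex.zero_le_real.2 (by linarith)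
  · -- reverse direction
    rintro ⟨Q', hder, hint, hneg, hineq⟩ t0 t1 ht0 ht1 h01
    show (Q t0 - Q t1).PosSemidef
    have hii : ∀ i j, IntervalIntegrable (fun t => Q' t i j) volume t0 t1 := by
      intro i j
      rw [intervalIntegrable_iff_integrableOn_Ioc_of_le h01]
      exact (hint t0 t1 ht0 ht1 i j).mono_set Ioc_subset_Icc_self
    refine posSemidef_iff_dotProduct_mulVec.2 ?_
    constructor
    · exact (hQherm t0 ht0).sub (hQherm t1 ht1)
    · intro v
      have h1 := (hineq t0 t1 ht0 ht1 h01).dotProduct_mulVec_nonneg v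
      have h2 : star v ⬝ᵥ matInt Q' t0 t1 *ᵥ v ≤ 0 := by
        rw [matInt_qform hii v]
        have haele : ∀ᵐ t ∂(volume.restrict (Ioc t0 t1)),
            star v ⬝ᵥ Q' t *ᵥ v ≤ 0 := by
          filter_upwards [ae_restrict_mem measurableSet_Ioc, ae_restrict_of_ae hneg]
            with t hmem hn
          have htI : t ∈ I := (hIconn.out ht0 ht1) ⟨hmem.1.le, hmem.2⟩
          have h3 := (hn htI).dotProduct_mulVec_nonneg v
          have he : star v ⬝ᵥ ((0 : Matrix (Fin n) (Fin n) ℂ) - Q' t) *ᵥ v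
              = -(star v ⬝ᵥ Q' t *ᵥ v) := by
            simp [Matrix.sub_mulVec, Matrix.neg_mulVec, dotProduct_sub, dotProduct_neg]
          rw [he] at h3
          exact neg_nonneg.1 h3
        rw [intervalIntegral.integral_of_le h01]
        have hfeq : ∀ᵐ t ∂(volume.restrict (Ioc t0 t1)),
            star v ⬝ᵥ Q' t *ᵥ v = (((star v ⬝ᵥ Q' t *ᵥ v).re : ℝ) : ℂ) := by
          filter_upwards [haele] with t h4
          have h5 := (Complex.le_def.1 h4).2
          apply Complex.ext <;> simp_all
        have hco : (∫ a in Ioc t0 t1, (((star v ⬝ᵥ Q' a *ᵥ v).re : ℝ) : ℂ))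
            = (((∫ a in Ioc t0 t1, (star v ⬝ᵥ Q' a *ᵥ v).re) : ℝ) : ℂ) := integral_ofReal
        rw [integral_congr_ae hfeq, hco]
        have h6 : ∫ t in Ioc t0 t1, (star v ⬝ᵥ Q' t *ᵥ v).re ≤ 0 := by
          apply integral_nonpos_of_ae
          filter_upwards [haele] with t h4
          simpa using (Complex.le_def.1 h4).1
        calc (((∫ t in Ioc t0 t1, (star v ⬝ᵥ Q' t *ᵥ v).re) : ℝ) : ℂ)
            ≤ (((0 : ℝ)) : ℂ) := Complex.real_le_real.2 h6
          _ = 0 := by simp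
      have h3 : star v ⬝ᵥ (Q t1 - Q t0) *ᵥ v ≤ star v ⬝ᵥ matInt Q' t0 t1 *ᵥ v := by
        have he : star v ⬝ᵥ (matInt Q' t0 t1 - (Q t1 - Q t0)) *ᵥ v
            = star v ⬝ᵥ matInt Q' t0 t1 *ᵥ v - star v ⬝ᵥ (Q t1 - Q t0) *ᵥ v := by
          simp [Matrix.sub_mulVec, dotProduct_sub]
        rw [he] at h1
        exact sub_nonneg.1 h1
      have h4 : star v ⬝ᵥ (Q t1 - Q t0) *ᵥ v ≤ 0 := h3.trans h2
      have he2 : star v ⬝ᵥ (Q t0 - Q t1) *ᵥ v = -(star v ⬝ᵥ (Q t1 - Q t0) *ᵥ v) := by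
        simp [Matrix.sub_mulVec, dotProduct_sub]
      rw [he2]
      exact neg_nonneg.2 h4

end Paper
end

section
/- Consider an LTV system on an open interval I ⊆ ℝ with coefficients A, B, C, D, let Q : I → ℂ^{n×n} be pointwise Hermitian positive semidefinite such that V_Q is a storage function for this system, and assume there exists a fundamental solution matrix X for A anchored at some t0 ∈ I. Then Q is locally absolutely upper semicontinuous on I, i.e., for every compact subinterval [a,b] ⊆ I there exists a Bochner-integrable G : [a,b] → ℂ^{n×n}, pointwise Hermitian, with Q(s) − Q(r) ≤ ∫_r^s G(t) dt in the Loewner order for all a ≤ r ≤ s ≤ b. -/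
open MeasureTheory Matrix Set Filter Topology
open scoped ComplexOrder ENNReal

namespace Paper

lemma paperAux_single_form {n : ℕ} (N : Matrix (Fin n) (Fin n) ℂ) (i j : Fin n) :
    star (Pi.single i (1:ℂ)) ⬝ᵥ (N *ᵥ Pi.single j (1:ℂ)) = N i j := by
  simp [dotProduct, Matrix.mulVec, Pi.single_apply, Pi.star_apply, Finset.mul_sum,
    apply_ite, Finset.sum_ite_eq]

lemma paperAux_diag_re_nonneg {n : ℕ} {N : Matrix (Fin n) (Fin n) ℂ} (hN : N.PosSemidef) (i : Fin n) :
    0 ≤ (N i i).re := by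
  have h := hN.re_dotProduct_nonneg (Pi.single i 1)
  simpa [dotProduct, Matrix.mulVec, Pi.single_apply, Pi.star_apply, Finset.mul_sum,
    apply_ite, Finset.sum_ite_eq] using h

lemma paperAux_entry_bound {n : ℕ} {N : Matrix (Fin n) (Fin n) ℂ} (hN : N.PosSemidef) (i j : Fin n) :
    ‖N i j‖ ≤ (N i i).re + (N j j).re := by
  by_cases hij : i = j
  · subst hij
    have hd := paperAux_diag_re_nonneg hN i
    have him : (N i i).im = 0 := by
      have hs : (starRingEnd ℂ) (N i i) = N i i := hN.1.apply i i
      have := congrArg Complex.im hs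
      simp at this
      linarith
    have : N i i = ((N i i).re : ℂ) := Complex.ext (by simp) (by simp [him])
    rw [this]
    simp [Complex.norm_real, abs_of_nonneg hd]
    linarith
  · set z := N i j with hz
    by_cases hz0 : z = 0
    · rw [hz0]
      simp
      have := paperAux_diag_re_nonneg hN i; have := paperAux_diag_re_nonneg hN j; linarith
    · set a : ℂ := (‖z‖ : ℂ) with ha
      have hznorm : a ≠ 0 := by
        simpa [ha] using norm_ne_zero_iff.mpr hz0
      set θ : ℂ := -((starRingEnd ℂ) z / a) with hθ
      set ei : Fin n → ℂ := Pi.single i 1 with hei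
      set ej : Fin n → ℂ := Pi.single j 1 with hej
      have hform := hN.re_dotProduct_nonneg (ei + θ • ej)
      have hstar : star (ei + θ • ej) = ei + (starRingEnd ℂ) θ • ej := by
        rw [star_add, star_smul]
        congr 1
        · rw [hei]; ext k; by_cases h : k = i <;> simp [h, Pi.single_apply]
        · congr 1; rw [hej]; ext k; by_cases h : k = j <;> simp [h, Pi.single_apply]
      have hexp : star (ei + θ • ej) ⬝ᵥ (N *ᵥ (ei + θ • ej))
          = N i i + θ * N i j + (starRingEnd ℂ) θ * N j i
            + ((starRingEnd ℂ) θ * θ) * N j j := by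
        rw [hstar]
        simp only [Matrix.mulVec_add, Matrix.mulVec_smul, dotProduct_add,
          add_dotProduct, smul_dotProduct, dotProduct_smul,
          smul_eq_mul]
        have h11 : ei ⬝ᵥ (N *ᵥ ei) = N i i := by
          have := paperAux_single_form N i i; simpa [hei, Pi.single_star] using this
        have h12 : ei ⬝ᵥ (N *ᵥ ej) = N i j := by
          have := paperAux_single_form N i j; simpa [hei, hej, Pi.single_star] using this
        have h21 : ej ⬝ᵥ (N *ᵥ ei) = N j i := by
          have := paperAux_single_form N j i; simpa [hei, hej, Pi.single_star] using this
        have h22 : ej ⬝ᵥ (N *ᵥ ej) = N j j := by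
          have := paperAux_single_form N j j; simpa [hej, Pi.single_star] using this
        rw [h11, h12, h21, h22]
        ring
      have habs : z * (starRingEnd ℂ) z = a * a := by
        rw [Complex.mul_conj, Complex.normSq_eq_norm_sq, ha]
        push_cast; ring
      have hca : (starRingEnd ℂ) a = a := by rw [ha, Complex.conj_ofReal]
      have hθz : θ * N i j = -a := by
        have : θ * N i j = -(z * (starRingEnd ℂ) z / a) := by rw [hθ, ← hz]; ring
        rw [this, habs, mul_div_assoc, div_self hznorm, mul_one]
      have hji : N j i = (starRingEnd ℂ) z := by
        rw [hz]; exact (hN.1.apply j i).symm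
      have hθz' : (starRingEnd ℂ) θ * N j i = -a := by
        have hcθ : (starRingEnd ℂ) θ = -(z / a) := by
          rw [hθ, map_neg, map_div₀, Complex.conj_conj, hca]
        rw [hcθ, hji]
        have : -(z / a) * (starRingEnd ℂ) z = -(z * (starRingEnd ℂ) z / a) := by ring
        rw [this, habs, mul_div_assoc, div_self hznorm, mul_one]
      have hθθ : (starRingEnd ℂ) θ * θ = 1 := by
        have hcθ : (starRingEnd ℂ) θ = -(z / a) := by
          rw [hθ, map_neg, map_div₀, Complex.conj_conj, hca]
        rw [hcθ, hθ]
        have : -(z / a) * -((starRingEnd ℂ) z / a) = z * (starRingEnd ℂ) z / (a * a) := by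
          ring
        rw [this, habs, div_self (mul_ne_zero hznorm hznorm)]
      rw [hexp, hθz, hθz', hθθ] at hform
      have hform' : 0 ≤ (N i i).re - ‖z‖ - ‖z‖ + (N j j).re := by
        have := hform
        simp [ha, Complex.add_re, Complex.neg_re, Complex.ofReal_re] at this
        linarith
      have := norm_nonneg z
      linarith


lemma paperAux_form_conj {n : ℕ} (X Q : Matrix (Fin n) (Fin n) ℂ) (v : Fin n → ℂ) :
    star (X *ᵥ v) ⬝ᵥ (Q *ᵥ (X *ᵥ v)) = star v ⬝ᵥ ((Xᴴ * Q * X) *ᵥ v) := by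
  simp [Matrix.star_mulVec, Matrix.dotProduct_mulVec, Matrix.vecMul_vecMul, Matrix.mul_assoc]

lemma paperAux_herm_star {n : ℕ} {H : Matrix (Fin n) (Fin n) ℂ} (hH : H.IsHermitian)
    (v : Fin n → ℂ) : star (star v ⬝ᵥ (H *ᵥ v)) = star v ⬝ᵥ (H *ᵥ v) := by
  simp only [dotProduct, Matrix.mulVec, Pi.star_apply, star_sum, star_mul', star_star,
    Finset.mul_sum, Finset.sum_mul]
  rw [Finset.sum_comm]
  refine Finset.sum_congr rfl fun i _ => Finset.sum_congr rfl fun j _ => ?_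
  rw [show star (H j i) = H i j from hH.apply i j]
  ring

lemma paperAux_herm_im {n : ℕ} {H : Matrix (Fin n) (Fin n) ℂ} (hH : H.IsHermitian)
    (v : Fin n → ℂ) : (star v ⬝ᵥ (H *ᵥ v)).im = 0 := by
  have h := congrArg Complex.im (paperAux_herm_star hH v)
  simp only [Complex.star_def, Complex.conj_im] at h
  linarith

lemma paperAux_bdd {k l : ℕ} {a b : ℝ} (Y : ℝ → Matrix (Fin k) (Fin l) ℂ)
    (h : ∀ i j, ContinuousOn (fun t => Y t i j) (Icc a b)) :
    ∃ K : ℝ, 0 ≤ K ∧ ∀ t ∈ Icc a b, ∀ i j, ‖Y t i j‖ ≤ K := by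
  obtain ⟨C, hC⟩ := isCompact_Icc.exists_bound_of_continuousOn
    (f := fun t (p : Fin k × Fin l) => Y t p.1 p.2) (continuousOn_pi.mpr fun p => h p.1 p.2)
  exact ⟨max C 0, le_max_right _ _, fun t ht i j =>
    le_trans (le_trans (norm_le_pi_norm (fun p : Fin k × Fin l => Y t p.1 p.2) (i, j)) (hC t ht)) (le_max_left _ _)⟩

lemma paperAux_diag_herm {n : ℕ} (x : ℝ) :
    (Matrix.diagonal (fun _ : Fin n => (x : ℂ))).IsHermitian := by
  rw [Matrix.IsHermitian, Matrix.diagonal_conjTranspose]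
  have : (star fun _ : Fin n => (x : ℂ)) = fun _ : Fin n => (x : ℂ) := by
    funext i
    exact Complex.conj_ofReal x
  rw [this]

lemma paperAux_dot_bound {n : ℕ} (N : Matrix (Fin n) (Fin n) ℂ) (p q : Fin n → ℂ) {c : ℝ}
    (hc : ∀ i j, ‖N i j‖ ≤ c) :
    ‖star p ⬝ᵥ (N *ᵥ q)‖ ≤ c * ((∑ i, ‖p i‖) * (∑ j, ‖q j‖)) := by
  have h1 : star p ⬝ᵥ (N *ᵥ q) = ∑ i, ∑ j, star (p i) * (N i j * q j) := by
    simp [dotProduct, Matrix.mulVec, Finset.mul_sum]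
  rw [h1]
  calc ‖∑ i, ∑ j, star (p i) * (N i j * q j)‖
      ≤ ∑ i, ∑ j, ‖star (p i) * (N i j * q j)‖ :=
        (norm_sum_le _ _).trans (Finset.sum_le_sum fun i _ => norm_sum_le _ _)
    _ ≤ ∑ i, ∑ j, ‖p i‖ * (c * ‖q j‖) := by
        refine Finset.sum_le_sum fun i _ => Finset.sum_le_sum fun j _ => ?_
        rw [norm_mul, norm_mul, norm_star]
        exact mul_le_mul_of_nonneg_left
          (mul_le_mul_of_nonneg_right (hc i j) (norm_nonneg _)) (norm_nonneg _)
    _ = c * ((∑ i, ‖p i‖) * (∑ j, ‖q j‖)) := by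
        rw [Finset.sum_mul_sum, Finset.mul_sum]
        refine Finset.sum_congr rfl fun i _ => ?_
        rw [Finset.mul_sum]
        exact Finset.sum_congr rfl fun j _ => by ring

lemma paperAux_vec_sum_bound {n : ℕ} (Z : Matrix (Fin n) (Fin n) ℂ) (v : Fin n → ℂ) {K : ℝ}
    (hK : ∀ i j, ‖Z i j‖ ≤ K) :
    ∑ i, ‖(Z *ᵥ v) i‖ ≤ (n : ℝ) * K * (∑ k, ‖v k‖) := by
  calc ∑ i, ‖(Z *ᵥ v) i‖ ≤ ∑ i : Fin n, ∑ k, ‖Z i k‖ * ‖v k‖ := by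
        refine Finset.sum_le_sum fun i _ => ?_
        have : (Z *ᵥ v) i = ∑ k, Z i k * v k := by simp [Matrix.mulVec, dotProduct]
        rw [this]
        refine (norm_sum_le _ _).trans (Finset.sum_le_sum fun k _ => ?_)
        rw [norm_mul]
    _ ≤ ∑ i : Fin n, ∑ k, K * ‖v k‖ :=
        Finset.sum_le_sum fun i _ => Finset.sum_le_sum fun k _ =>
          mul_le_mul_of_nonneg_right (hK i k) (norm_nonneg _)
    _ = (n : ℝ) * K * (∑ k, ‖v k‖) := by
        rw [Finset.sum_const, ← Finset.mul_sum]
        simp [Finset.card_univ, mul_assoc]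

lemma paperAux_est {n : ℕ} (N Ys Yr : Matrix (Fin n) (Fin n) ℂ)
    (v : Fin n → ℂ) {c K e : ℝ}
    (hc : ∀ i j, ‖N i j‖ ≤ c) (hc0 : 0 ≤ c)
    (hKs : ∀ i j, ‖Ys i j‖ ≤ K) (hKr : ∀ i j, ‖Yr i j‖ ≤ K) (hK0 : 0 ≤ K)
    (hYd : ∀ i j, ‖(Ys - Yr) i j‖ ≤ K ^ 2 * e) (he0 : 0 ≤ e) :
    (star (Ys *ᵥ v) ⬝ᵥ (N *ᵥ (Ys *ᵥ v))).re - (star (Yr *ᵥ v) ⬝ᵥ (N *ᵥ (Yr *ᵥ v))).re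
      ≤ 2 * c * (n : ℝ) ^ 3 * K ^ 3 * e * (∑ i, ‖v i‖ ^ 2) := by
  have hiden : star (Ys *ᵥ v) ⬝ᵥ (N *ᵥ (Ys *ᵥ v)) - star (Yr *ᵥ v) ⬝ᵥ (N *ᵥ (Yr *ᵥ v))
      = star ((Ys - Yr) *ᵥ v) ⬝ᵥ (N *ᵥ (Ys *ᵥ v))
        + star (Yr *ᵥ v) ⬝ᵥ (N *ᵥ ((Ys - Yr) *ᵥ v)) := by
    rw [Matrix.sub_mulVec]
    simp only [star_sub, sub_dotProduct, Matrix.mulVec_sub, dotProduct_sub]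
    ring
  set Sv : ℝ := ∑ k, ‖v k‖ with hSv
  have hSv0 : 0 ≤ Sv := Finset.sum_nonneg fun k _ => norm_nonneg _
  have hws := paperAux_vec_sum_bound Ys v hKs
  have hwr := paperAux_vec_sum_bound Yr v hKr
  have hd := paperAux_vec_sum_bound (Ys - Yr) v hYd
  have hb1 := paperAux_dot_bound N ((Ys - Yr) *ᵥ v) (Ys *ᵥ v) hc
  have hb2 := paperAux_dot_bound N (Yr *ᵥ v) ((Ys - Yr) *ᵥ v) hc
  have hre : (star (Ys *ᵥ v) ⬝ᵥ (N *ᵥ (Ys *ᵥ v))).re - (star (Yr *ᵥ v) ⬝ᵥ (N *ᵥ (Yr *ᵥ v))).re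
      ≤ ‖star ((Ys - Yr) *ᵥ v) ⬝ᵥ (N *ᵥ (Ys *ᵥ v))‖
        + ‖star (Yr *ᵥ v) ⬝ᵥ (N *ᵥ ((Ys - Yr) *ᵥ v))‖ := by
    rw [← Complex.sub_re, hiden]
    refine (Complex.re_le_norm _).trans ?_
    exact norm_add_le _ _
  have hSd0 : 0 ≤ ∑ i, ‖((Ys - Yr) *ᵥ v) i‖ := Finset.sum_nonneg fun k _ => norm_nonneg _
  have hSw0 : 0 ≤ ∑ i, ‖(Ys *ᵥ v) i‖ := Finset.sum_nonneg fun k _ => norm_nonneg _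
  have hSw0' : 0 ≤ ∑ i, ‖(Yr *ᵥ v) i‖ := Finset.sum_nonneg fun k _ => norm_nonneg _
  have hprod1 : (∑ i, ‖((Ys - Yr) *ᵥ v) i‖) * (∑ i, ‖(Ys *ᵥ v) i‖)
      ≤ ((n : ℝ) * (K ^ 2 * e) * Sv) * ((n : ℝ) * K * Sv) :=
    mul_le_mul hd hws hSw0 (by positivity)
  have hprod2 : (∑ i, ‖(Yr *ᵥ v) i‖) * (∑ i, ‖((Ys - Yr) *ᵥ v) i‖)
      ≤ ((n : ℝ) * K * Sv) * ((n : ℝ) * (K ^ 2 * e) * Sv) :=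
    mul_le_mul hwr hd hSd0 (by positivity)
  have hSv2 : Sv ^ 2 ≤ (n : ℝ) * ∑ i, ‖v i‖ ^ 2 := by
    have := sq_sum_le_card_mul_sum_sq (s := Finset.univ) (f := fun i : Fin n => ‖v i‖)
    simpa [Finset.card_univ] using this
  have hS20 : 0 ≤ ∑ i, ‖v i‖ ^ 2 := Finset.sum_nonneg fun k _ => by positivity
  nlinarith [mul_le_mul_of_nonneg_left hprod1 hc0, mul_le_mul_of_nonneg_left hprod2 hc0,
    mul_le_mul_of_nonneg_left hSv2 (by positivity : (0:ℝ) ≤ c * (n:ℝ)^2 * K^3 * e),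
    hre, hb1, hb2, mul_nonneg hc0 he0]

/-- the matrix function inducing a quadratic storage function of a passive
LTV system is locally absolutely upper semicontinuous. -/
theorem statement7 {n m : ℕ} (I : Set ℝ) (hIopen : IsOpen I) (hIconn : I.OrdConnected)
    (A : ℝ → Matrix (Fin n) (Fin n) ℂ) (B : ℝ → Matrix (Fin n) (Fin m) ℂ)
    (C : ℝ → Matrix (Fin m) (Fin n) ℂ) (D : ℝ → Matrix (Fin m) (Fin m) ℂ)
    (hLTV : IsLTV I A B C D)
    (Q : ℝ → Matrix (Fin n) (Fin n) ℂ) (hQpsd : ∀ t ∈ I, (Q t).PosSemidef)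
    (hstor : IsStorage I A B C D (quadStorage Q))
    (t0 : ℝ) (X : ℝ → Matrix (Fin n) (Fin n) ℂ) (hX : IsFundamental I A t0 X) :
    ∀ a b : ℝ, a ∈ I → b ∈ I → IsAUCOn Q a b := by
  classical
  obtain ⟨ht0I, hX1, hXunit, X', hXac, hXode⟩ := hX
  obtain ⟨hX'int, hXftc⟩ := hXac
  have hQH : ∀ t ∈ I, (Q t).IsHermitian := fun t ht => (hQpsd t ht).1
  have hdet : ∀ t ∈ I, IsUnit (X t).det := fun t ht =>
    (Matrix.isUnit_iff_isUnit_det _).mp (hXunit t ht)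
  have hXcont : ∀ a' b' : ℝ, a' ∈ I → b' ∈ I → ∀ i j,
      ContinuousOn (fun t => X t i j) (Icc a' b') := by
    intro a' b' ha' hb' i j
    rcases le_or_gt a' b' with h | h
    · have hint : IntegrableOn (fun τ => X' τ i j) (uIcc a' b') volume := by
        rw [Set.uIcc_of_le h]; exact hX'int a' b' ha' hb' i j
      have hcont : ContinuousOn (fun t => X a' i j + ∫ τ in a'..t, X' τ i j) (uIcc a' b') :=
        continuousOn_const.add (intervalIntegral.continuousOn_primitive_interval hint)
      rw [Set.uIcc_of_le h] at hcont
      exact hcont.congr fun t ht => hXftc a' t ha' (hIconn.out ha' hb' ht) i j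
    · rw [Icc_eq_empty (not_le.mpr h)]; exact continuousOn_empty _
  have hM_mono : ∀ r ∈ I, ∀ s ∈ I, r ≤ s → ∀ v : Fin n → ℂ,
      (star (X s *ᵥ v) ⬝ᵥ (Q s *ᵥ (X s *ᵥ v))).re
        ≤ (star (X r *ᵥ v) ⬝ᵥ (Q r *ᵥ (X r *ᵥ v))).re := by
    intro r hr s hs hrs v
    have hsol : IsSIOSol I A B C D (fun t => X t *ᵥ v) (fun _ => 0)
        (fun t => C t *ᵥ (X t *ᵥ v)) := by
      refine ⟨?_, ?_, ⟨fun t => X' t *ᵥ v, ⟨?_, ?_⟩, ?_⟩, ?_⟩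
      · intro a' b' _ _ i
        exact MemLp.zero'
      · intro a' b' ha' hb' i
        rcases le_or_gt a' b' with h | h
        · have hrw : (fun t => (C t *ᵥ (X t *ᵥ v)) i)
              = ∑ j : Fin n, ((fun t => C t i j) • fun t => (X t *ᵥ v) j) := by
            funext t
            rw [Finset.sum_apply]
            simp [Matrix.mulVec, dotProduct]
          rw [hrw]
          refine memLp_finset_sum' _ fun j _ => ?_
          have hxc : ContinuousOn (fun t => (X t *ᵥ v) j) (Icc a' b') := by
            have hxe : (fun t => (X t *ᵥ v) j) = fun t => ∑ k, X t j k * v k := by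
              funext t; simp [Matrix.mulVec, dotProduct]
            rw [hxe]
            exact continuousOn_finset_sum _ fun k _ =>
              (hXcont a' b' ha' hb' j k).mul continuousOn_const
          obtain ⟨Kb, hKb⟩ := isCompact_Icc.exists_bound_of_continuousOn hxc
          have hxm : MemLp (fun t => (X t *ᵥ v) j) ⊤ (volume.restrict (Icc a' b')) :=
            memLp_top_of_bound (hxc.aestronglyMeasurable measurableSet_Icc) Kb
              ((ae_restrict_iff' measurableSet_Icc).mpr (ae_of_all _ hKb))
          exact MemLp.smul (r := 2) hxm (hLTV.2.2.1 a' b' ha' hb' i j)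
        · rw [Icc_eq_empty (not_le.mpr h), Measure.restrict_empty]
          exact ⟨aestronglyMeasurable_zero_measure _, by simp⟩
      · intro a' b' ha' hb' i
        have h2 := MeasureTheory.integrable_finset_sum (μ := volume.restrict (Icc a' b'))
          Finset.univ (fun j (_ : j ∈ Finset.univ) =>
            ((hX'int a' b' ha' hb' i j).mul_const (v j)))
        have hrw : (fun t => (X' t *ᵥ v) i) = fun t => ∑ j, X' t i j * v j := by
          funext t; simp [Matrix.mulVec, dotProduct]
        rw [hrw]; exact h2
      · intro s' t' hs' ht' i
        have hInt : ∀ j : Fin n, IntervalIntegrable (fun τ => X' τ i j) volume s' t' := by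
          intro j
          have hmin : min s' t' ∈ I := by
            rcases min_choice s' t' with h | h <;> rw [h] <;> assumption
          have hmax : max s' t' ∈ I := by
            rcases max_choice s' t' with h | h <;> rw [h] <;> assumption
          refine MeasureTheory.IntegrableOn.intervalIntegrable ?_
          have h0 := hX'int (min s' t') (max s' t') hmin hmax i j
          simpa [Set.uIcc] using h0
        calc (X t' *ᵥ v) i = ∑ j, X t' i j * v j := by simp [Matrix.mulVec, dotProduct]
          _ = ∑ j, (X s' i j + ∫ τ in s'..t', X' τ i j) * v j :=
              Finset.sum_congr rfl fun j _ => by rw [← hXftc s' t' hs' ht' i j]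
          _ = (∑ j, X s' i j * v j) + ∑ j, (∫ τ in s'..t', X' τ i j) * v j := by
              simp [add_mul, Finset.sum_add_distrib]
          _ = (X s' *ᵥ v) i + ∫ τ in s'..t', (X' τ *ᵥ v) i := by
              have hA : (∑ j, X s' i j * v j) = (X s' *ᵥ v) i := by
                simp [Matrix.mulVec, dotProduct]
              have hB : (∫ τ in s'..t', (X' τ *ᵥ v) i)
                  = ∑ j, (∫ τ in s'..t', X' τ i j) * v j := by
                rw [show (fun τ => (X' τ *ᵥ v) i) = fun τ => ∑ j, X' τ i j * v j from
                    funext fun τ => by simp [Matrix.mulVec, dotProduct]]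
                rw [intervalIntegral.integral_finset_sum (fun j _ => (hInt j).mul_const (v j))]
                exact Finset.sum_congr rfl fun j _ => intervalIntegral.integral_mul_const _ _
              rw [hA, hB]
      · filter_upwards [hXode] with t hXt ht
        rw [hXt ht]
        simp [Matrix.mulVec_mulVec, Matrix.mulVec_zero]
      · exact ae_of_all _ fun t _ => by simp [Matrix.mulVec_zero]
    have hst := hstor.2.2 _ _ _ hsol r s hr hs hrs
    have hsup : supply (fun _ => (0 : Fin m → ℂ)) (fun t => C t *ᵥ (X t *ᵥ v)) r s = 0 := by
      simp [supply]
    rw [hsup] at hst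
    simp only [quadStorage] at hst
    linarith
  intro a b ha hb
  rcases le_or_gt a b with hab | hab
  swap
  · refine ⟨0, fun t => ?_, fun i j => ?_,
      fun r s har hrs hsb => absurd ((har.trans hrs).trans hsb) (not_le.mpr hab)⟩
    · simpa using Matrix.isHermitian_zero
    · simpa using (integrable_zero _ _ (volume.restrict (Icc a b)))
  have hsub : Icc a b ⊆ I := hIconn.out ha hb
  have hYcont : ∀ i j, ContinuousOn (fun t => (X t)⁻¹ i j) (Icc a b) := by
    have hXm : ContinuousOn X (Icc a b) := by
      rw [continuousOn_iff_continuous_restrict]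
      exact continuous_matrix fun i j =>
        continuousOn_iff_continuous_restrict.mp (hXcont a b ha hb i j)
    have hdetc : ContinuousOn (fun t => (X t).det) (Icc a b) :=
      (Continuous.matrix_det continuous_id).comp_continuousOn hXm
    have hadjc : ContinuousOn (fun t => (X t).adjugate) (Icc a b) :=
      (Continuous.matrix_adjugate continuous_id).comp_continuousOn hXm
    have hYc : ContinuousOn (fun t => (X t)⁻¹) (Icc a b) := by
      refine ContinuousOn.congr
        ((hdetc.inv₀ fun t ht => (hdet t (hsub ht)).ne_zero).smul hadjc) ?_
      intro t ht
      show (X t)⁻¹ = ((X t).det)⁻¹ • (X t).adjugate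
      simp [Matrix.inv_def, Ring.inverse_eq_inv']
    intro i j
    exact ((continuous_apply j).comp (continuous_apply i)).comp_continuousOn hYc
  obtain ⟨K, hK0, hKb⟩ := paperAux_bdd (fun t => (X t)⁻¹) hYcont
  set g0 : ℝ → ℝ := fun t => ∑ p : Fin n, ∑ q : Fin n, ‖X' t p q‖ with hg0def
  have hg0int : IntegrableOn g0 (Icc a b) := by
    refine MeasureTheory.integrable_finset_sum _ fun p _ => ?_
    exact MeasureTheory.integrable_finset_sum _ fun q _ => (hX'int a b ha hb p q).norm
  have hg0nn : ∀ t, 0 ≤ g0 t := fun t =>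
    Finset.sum_nonneg fun p _ => Finset.sum_nonneg fun q _ => norm_nonneg _
  have hMpsd : ∀ t ∈ I, ((X t)ᴴ * Q t * X t).PosSemidef := fun t ht =>
    (hQpsd t ht).conjTranspose_mul_mul_same (X t)
  have hdiag : ∀ r ∈ Icc a b, ∀ i : Fin n,
      (((X r)ᴴ * Q r * X r) i i).re ≤ (((X a)ᴴ * Q a * X a) i i).re := by
    intro r hr i
    have h1 := hM_mono a ha r (hsub hr) hr.1 (Pi.single i 1)
    rw [paperAux_form_conj, paperAux_form_conj, paperAux_single_form,
      paperAux_single_form] at h1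
    exact h1
  have hMaii : ∀ i : Fin n, 0 ≤ (((X a)ᴴ * Q a * X a) i i).re := fun i =>
    paperAux_diag_re_nonneg (hMpsd a ha) i
  set c : ℝ := 2 * ∑ k : Fin n, (((X a)ᴴ * Q a * X a) k k).re with hcdef
  have hc0 : 0 ≤ c := by
    rw [hcdef]
    have := Finset.sum_nonneg fun k (_ : k ∈ Finset.univ) => hMaii k
    linarith
  have hMbound : ∀ r ∈ Icc a b, ∀ i j, ‖((X r)ᴴ * Q r * X r) i j‖ ≤ c := by
    intro r hr i j
    have h1 := paperAux_entry_bound (hMpsd r (hsub hr)) i j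
    have h2 := hdiag r hr i
    have h3 := hdiag r hr j
    have h4 : (((X a)ᴴ * Q a * X a) i i).re ≤ ∑ k : Fin n, (((X a)ᴴ * Q a * X a) k k).re :=
      Finset.single_le_sum (fun k _ => hMaii k) (Finset.mem_univ i)
    have h5 : (((X a)ᴴ * Q a * X a) j j).re ≤ ∑ k : Fin n, (((X a)ᴴ * Q a * X a) k k).re :=
      Finset.single_le_sum (fun k _ => hMaii k) (Finset.mem_univ j)
    rw [hcdef]; linarith
  refine ⟨fun t => Matrix.diagonal (fun _ : Fin n => ((2 * c * (n:ℝ)^3 * K^3 * g0 t : ℝ) : ℂ)),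
    fun t => paperAux_diag_herm _, fun i j => ?_, fun r s har hrs hsb => ?_⟩
  · by_cases h : i = j
    · subst h
      simp only [Matrix.diagonal_apply_eq]
      exact (hg0int.const_mul _).ofReal
    · simp only [Matrix.diagonal_apply_ne _ h]
      exact integrable_zero _ _ _
  · have hrI : r ∈ Icc a b := ⟨har, hrs.trans hsb⟩
    have hsI : s ∈ Icc a b := ⟨har.trans hrs, hsb⟩
    have hrII : r ∈ I := hsub hrI
    have hsII : s ∈ I := hsub hsI
    set E : ℝ := ∫ t in r..s, g0 t with hEdef
    have hE0 : 0 ≤ E := intervalIntegral.integral_nonneg hrs fun t _ => hg0nn t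
    have hmat : matInt (fun t => Matrix.diagonal
          (fun _ : Fin n => ((2 * c * (n:ℝ)^3 * K^3 * g0 t : ℝ) : ℂ))) r s
        = Matrix.diagonal (fun _ : Fin n => ((2 * c * (n:ℝ)^3 * K^3 * E : ℝ) : ℂ)) := by
      ext i j
      by_cases h : i = j
      · subst h
        simp only [matInt, Matrix.of_apply, Matrix.diagonal_apply_eq]
        rw [intervalIntegral.integral_ofReal, intervalIntegral.integral_const_mul]
      · simp [matInt, Matrix.diagonal_apply_ne _ h]
    have hii : ∀ p q : Fin n, IntervalIntegrable (fun t => ‖X' t p q‖) volume r s := by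
      intro p q
      refine MeasureTheory.IntegrableOn.intervalIntegrable ?_
      rw [Set.uIcc_of_le hrs]
      exact MeasureTheory.IntegrableOn.mono_set ((hX'int a b ha hb p q).norm) (Icc_subset_Icc har hsb)
    have hXsum : ∑ p : Fin n, ∑ q : Fin n, ‖X r p q - X s p q‖ ≤ E := by
      have hstep : ∀ p q : Fin n, ‖X r p q - X s p q‖ ≤ ∫ t in r..s, ‖X' t p q‖ := by
        intro p q
        have h1 := hXftc r s hrII hsII p q
        have h2 : X r p q - X s p q = -(∫ τ in r..s, X' τ p q) := by rw [h1]; ring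
        rw [h2, norm_neg]
        exact intervalIntegral.norm_integral_le_integral_norm hrs
      have hEeq : E = ∑ p : Fin n, ∑ q : Fin n, ∫ t in r..s, ‖X' t p q‖ := by
        rw [hEdef, hg0def]
        rw [intervalIntegral.integral_finset_sum (fun p _ => ?_)]
        · exact Finset.sum_congr rfl fun p _ =>
            intervalIntegral.integral_finset_sum (fun q _ => hii p q)
        · refine MeasureTheory.IntegrableOn.intervalIntegrable ?_
          rw [Set.uIcc_of_le hrs]
          refine MeasureTheory.integrable_finset_sum _ fun q _ => ?_
          exact MeasureTheory.IntegrableOn.mono_set ((hX'int a b ha hb p q).norm) (Icc_subset_Icc har hsb)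
      rw [hEeq]
      exact Finset.sum_le_sum fun p _ => Finset.sum_le_sum fun q _ => hstep p q
    have hYd : ∀ i j : Fin n, ‖((X s)⁻¹ - (X r)⁻¹) i j‖ ≤ K ^ 2 * E := by
      intro i j
      have e1 : (X s)⁻¹ * X s = 1 := Matrix.nonsing_inv_mul _ (hdet s hsII)
      have e2 : X r * (X r)⁻¹ = 1 := Matrix.mul_nonsing_inv _ (hdet r hrII)
      have hid : (X s)⁻¹ - (X r)⁻¹ = (X s)⁻¹ * (X r - X s) * (X r)⁻¹ := by
        rw [Matrix.mul_sub, Matrix.sub_mul, Matrix.mul_assoc ((X s)⁻¹) (X r) ((X r)⁻¹),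
          e2, Matrix.mul_one, e1, Matrix.one_mul]
      rw [hid]
      have hentry : ((X s)⁻¹ * (X r - X s) * (X r)⁻¹) i j
          = ∑ q : Fin n, (∑ p : Fin n, (X s)⁻¹ i p * (X r - X s) p q) * (X r)⁻¹ q j := by
        simp [Matrix.mul_apply]
      rw [hentry]
      calc ‖∑ q : Fin n, (∑ p : Fin n, (X s)⁻¹ i p * (X r - X s) p q) * (X r)⁻¹ q j‖
          ≤ ∑ q : Fin n, ∑ p : Fin n, ‖(X s)⁻¹ i p‖ * ‖(X r - X s) p q‖ * ‖(X r)⁻¹ q j‖ := by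
            refine (norm_sum_le _ _).trans (Finset.sum_le_sum fun q _ => ?_)
            rw [norm_mul]
            refine le_trans (mul_le_mul_of_nonneg_right (norm_sum_le _ _) (norm_nonneg _)) ?_
            rw [Finset.sum_mul]
            exact Finset.sum_le_sum fun p _ => by rw [norm_mul]
        _ ≤ ∑ q : Fin n, ∑ p : Fin n, K * ‖(X r - X s) p q‖ * K := by
            refine Finset.sum_le_sum fun q _ => Finset.sum_le_sum fun p _ => ?_
            have hb1 := hKb s hsI i p
            have hb2 := hKb r hrI q j
            have hn1 : (0:ℝ) ≤ ‖(X r - X s) p q‖ := norm_nonneg _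
            have hn2 : (0:ℝ) ≤ ‖(X s)⁻¹ i p‖ := norm_nonneg _
            have hn3 : (0:ℝ) ≤ ‖(X r)⁻¹ q j‖ := norm_nonneg _
            exact le_trans
              (mul_le_mul_of_nonneg_right (mul_le_mul_of_nonneg_right hb1 hn1) hn3)
              (mul_le_mul_of_nonneg_left hb2 (mul_nonneg hK0 hn1))
        _ = K ^ 2 * ∑ p : Fin n, ∑ q : Fin n, ‖X r p q - X s p q‖ := by
            rw [Finset.sum_comm]
            rw [Finset.mul_sum]
            refine Finset.sum_congr rfl fun p _ => ?_
            rw [Finset.mul_sum]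
            refine Finset.sum_congr rfl fun q _ => ?_
            rw [Matrix.sub_apply]
            ring
        _ ≤ K ^ 2 * E := mul_le_mul_of_nonneg_left hXsum (by positivity)
    rw [hmat]
    have hZherm : (Matrix.diagonal (fun _ : Fin n => ((2 * c * (n:ℝ)^3 * K^3 * E : ℝ) : ℂ))
        - (Q s - Q r)).IsHermitian :=
      (paperAux_diag_herm _).sub ((hQH s hsII).sub (hQH r hrII))
    refine Matrix.PosSemidef.of_dotProduct_mulVec_nonneg hZherm fun v => ?_
    have him := paperAux_herm_im hZherm v
    have hdiagform : (star v ⬝ᵥ (Matrix.diagonal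
          (fun _ : Fin n => ((2 * c * (n:ℝ)^3 * K^3 * E : ℝ) : ℂ)) *ᵥ v))
        = ((2 * c * (n:ℝ)^3 * K^3 * E * (∑ i, ‖v i‖^2) : ℝ) : ℂ) := by
      have h1 : star v ⬝ᵥ (Matrix.diagonal
            (fun _ : Fin n => ((2 * c * (n:ℝ)^3 * K^3 * E : ℝ) : ℂ)) *ᵥ v)
          = ∑ i, ((2 * c * (n:ℝ)^3 * K^3 * E : ℝ) : ℂ) * (star (v i) * v i) := by
        simp only [dotProduct, Matrix.mulVec_diagonal, Pi.star_apply]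
        exact Finset.sum_congr rfl fun i _ => by ring
      have h2 : ∀ z : ℂ, star z * z = ((‖z‖^2 : ℝ) : ℂ) := fun z => by
        rw [show star z * z = z * star z from mul_comm _ _, Complex.star_def, Complex.mul_conj,
          Complex.sq_norm z]
      rw [h1]
      simp_rw [h2]
      rw [← Finset.mul_sum]
      push_cast
      ring
    have hmain : (star v ⬝ᵥ (Q s *ᵥ v)).re - (star v ⬝ᵥ (Q r *ᵥ v)).re
        ≤ 2 * c * (n:ℝ)^3 * K^3 * E * (∑ i, ‖v i‖^2) := by
      have hv1 : X s *ᵥ ((X s)⁻¹ *ᵥ v) = v := by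
        rw [Matrix.mulVec_mulVec, Matrix.mul_nonsing_inv _ (hdet s hsII), Matrix.one_mulVec]
      have hv2 : X r *ᵥ ((X r)⁻¹ *ᵥ v) = v := by
        rw [Matrix.mulVec_mulVec, Matrix.mul_nonsing_inv _ (hdet r hrII), Matrix.one_mulVec]
      have hq1 := hM_mono r hrII s hsII hrs ((X s)⁻¹ *ᵥ v)
      rw [hv1, paperAux_form_conj] at hq1
      have hq2 : (star v ⬝ᵥ (Q r *ᵥ v)).re
          = (star ((X r)⁻¹ *ᵥ v) ⬝ᵥ (((X r)ᴴ * Q r * X r) *ᵥ ((X r)⁻¹ *ᵥ v))).re := by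
        conv_lhs => rw [← hv2]
        rw [paperAux_form_conj]
      have hest := paperAux_est ((X r)ᴴ * Q r * X r) ((X s)⁻¹) ((X r)⁻¹) v
        (hMbound r hrI) hc0 (hKb s hsI) (hKb r hrI) hK0 hYd hE0
      linarith
    rw [Complex.le_def]
    constructor
    · simp only [Complex.zero_re]
      rw [Matrix.sub_mulVec, dotProduct_sub, Matrix.sub_mulVec,
        dotProduct_sub, hdiagform]
      simp only [Complex.sub_re, Complex.ofReal_re]
      linarith
    · simp only [Complex.zero_im]
      exact him.symm

end Paper
end

section
/- Consider an LTV system on an open interval I ⊆ ℝ with coefficients A, B, C, D, and let Q : I → ℂ^{n×n} be pointwise Hermitian positive semidefinite and locally absolutely upper semicontinuous such that V_Q is a storage function for this system. Suppose Q̃ : I → ℂ^{n×n} is pointwise Hermitian positive semidefinite and, for every t ∈ I, the one-sided limits L(t) := lim_{s→t⁻} Q(s) and R(t) := lim_{s→t⁺} Q(s) exist and satisfy L(t) ≥ Q̃(t) ≥ R(t) in the Loewner order. Then V_{Q̃} is a storage function for the same LTV system. -/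
open MeasureTheory Matrix Set Filter Topology
open scoped ComplexOrder ENNReal

namespace Paper

private lemma re_nonneg_of_psd {n : ℕ} {M : Matrix (Fin n) (Fin n) ℂ} (hM : M.PosSemidef)
    (v : Fin n → ℂ) : 0 ≤ (star v ⬝ᵥ M *ᵥ v).re := by
  have h := hM.dotProduct_mulVec_nonneg v
  simpa using (Complex.le_def.mp h).1

private lemma quad_mono {n : ℕ} {M N : Matrix (Fin n) (Fin n) ℂ} (h : LoewnerLE M N)
    (v : Fin n → ℂ) : (star v ⬝ᵥ M *ᵥ v).re ≤ (star v ⬝ᵥ N *ᵥ v).re := by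
  have h0 := re_nonneg_of_psd h v
  have he : star v ⬝ᵥ (N - M) *ᵥ v = star v ⬝ᵥ N *ᵥ v - star v ⬝ᵥ M *ᵥ v := by
    rw [Matrix.sub_mulVec, dotProduct_sub]
  rw [he, Complex.sub_re] at h0
  linarith

private lemma tendsto_quad {n : ℕ} {f : ℕ → Matrix (Fin n) (Fin n) ℂ} {v : ℕ → Fin n → ℂ}
    {M : Matrix (Fin n) (Fin n) ℂ} {w : Fin n → ℂ}
    (hf : ∀ i j, Tendsto (fun k => f k i j) atTop (𝓝 (M i j)))
    (hv : ∀ i, Tendsto (fun k => v k i) atTop (𝓝 (w i))) :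
    Tendsto (fun k => (star (v k) ⬝ᵥ (f k *ᵥ v k)).re) atTop (𝓝 ((star w ⬝ᵥ M *ᵥ w).re)) := by
  have h : Tendsto (fun k => star (v k) ⬝ᵥ (f k *ᵥ v k)) atTop (𝓝 (star w ⬝ᵥ M *ᵥ w)) := by
    simp only [dotProduct, Matrix.mulVec, Pi.star_apply, RCLike.star_def]
    exact tendsto_finset_sum _ fun i _ =>
      ((Complex.continuous_conj.tendsto _).comp (hv i)).mul
        (tendsto_finset_sum _ fun j _ => (hf i j).mul (hv j))
  exact (Complex.continuous_re.tendsto _).comp h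

private lemma supply_integrand_integrable {m : ℕ} {I : Set ℝ} {u y : ℝ → Fin m → ℂ}
    (hu : VecMemLocLp 2 I u) (hy : VecMemLocLp 2 I y) {a b : ℝ} (ha : a ∈ I) (hb : b ∈ I) :
    IntegrableOn (fun t => (star (y t) ⬝ᵥ u t).re) (Icc a b) := by
  have key : Integrable (fun t => star (y t) ⬝ᵥ u t) (volume.restrict (Icc a b)) := by
    have : Integrable (fun t => ∑ i, (starRingEnd ℂ) (y t i) * u t i)
        (volume.restrict (Icc a b)) := by
      refine integrable_finset_sum _ fun i _ => ?_
      have hyc : MemLp (fun t => (starRingEnd ℂ) (y t i)) 2 (volume.restrict (Icc a b)) := by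
        have hlip : LipschitzWith 1 (starRingEnd ℂ) := Complex.conjLIE.lipschitz
        exact hlip.comp_memLp (by simp) (hy a b ha hb i)
      have h1 : MemLp ((fun t => (starRingEnd ℂ) (y t i)) • fun t => u t i) 1
          (volume.restrict (Icc a b)) := by
        haveI : ENNReal.HolderTriple 2 2 1 := ⟨by rw [inv_one]; exact ENNReal.inv_two_add_inv_two⟩
        exact (hu a b ha hb i).smul hyc
      simpa [Pi.smul_apply, smul_eq_mul, Pi.mul_def] using memLp_one_iff_integrable.mp h1
    refine this.congr (Filter.Eventually.of_forall fun t => ?_)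
    simp [dotProduct, Pi.star_apply, RCLike.star_def]
  exact key.re

private lemma vec_continuousOn {k : ℕ} {I : Set ℝ} {x x' : ℝ → Fin k → ℂ}
    (hx : VecLocAC I x x') {a b : ℝ} (ha : a ∈ I) (hb : b ∈ I) (hab : a ≤ b)
    (hIcc : Icc a b ⊆ I) (i : Fin k) : ContinuousOn (fun t => x t i) (Icc a b) := by
  have hint : IntegrableOn (fun t => x' t i) (uIcc a b) := by
    rw [uIcc_of_le hab]; exact hx.1 a b ha hb i
  have hc : ContinuousOn (fun t => x a i + ∫ τ in a..t, x' τ i) (Icc a b) := by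
    have := (intervalIntegral.continuousOn_primitive_interval hint).add
      (continuousOn_const (c := x a i))
    rw [uIcc_of_le hab] at this
    refine this.congr fun t _ => ?_
    simp [add_comm]
  refine hc.congr fun t ht => ?_
  exact hx.2 a t ha (hIcc ht) i

/-- modifying the matrix of a quadratic storage function within the
one-sided-limit sandwich again yields a storage function. -/
theorem statement8 {n m : ℕ} (I : Set ℝ) (hIopen : IsOpen I) (hIconn : I.OrdConnected)
    (A : ℝ → Matrix (Fin n) (Fin n) ℂ) (B : ℝ → Matrix (Fin n) (Fin m) ℂ)
    (C : ℝ → Matrix (Fin m) (Fin n) ℂ) (D : ℝ → Matrix (Fin m) (Fin m) ℂ)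
    (hLTV : IsLTV I A B C D)
    (Q : ℝ → Matrix (Fin n) (Fin n) ℂ) (hQpsd : ∀ t ∈ I, (Q t).PosSemidef)
    (hQauc : ∀ a b : ℝ, a ∈ I → b ∈ I → IsAUCOn Q a b)
    (hstor : IsStorage I A B C D (quadStorage Q))
    (Qt : ℝ → Matrix (Fin n) (Fin n) ℂ) (hQtpsd : ∀ t ∈ I, (Qt t).PosSemidef)
    (L R : ℝ → Matrix (Fin n) (Fin n) ℂ)
    (hL : ∀ t ∈ I, ∀ i j, Tendsto (fun s => Q s i j) (𝓝[<] t) (𝓝 (L t i j)))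
    (hR : ∀ t ∈ I, ∀ i j, Tendsto (fun s => Q s i j) (𝓝[>] t) (𝓝 (R t i j)))
    (hsandwich : ∀ t ∈ I, LoewnerLE (Qt t) (L t) ∧ LoewnerLE (R t) (Qt t)) :
    IsStorage I A B C D (quadStorage Qt) := by
  obtain ⟨hQ0, hQzero, hQdiss⟩ := hstor
  refine ⟨?_, ?_, ?_⟩
  · intro t ht x
    exact mul_nonneg (by norm_num) (re_nonneg_of_psd (hQtpsd t ht) x)
  · intro t ht
    simp [quadStorage]
  · intro x u y hsol t0 t1 ht0 ht1 h01
    rcases eq_or_lt_of_le h01 with rfl | hlt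
    · simp [supply]
    have hIcc : Icc t0 t1 ⊆ I := hIconn.out ht0 ht1
    obtain ⟨hu2, hy2, ⟨x', hxAC, -⟩, -⟩ := id hsol
    set δ : ℝ := t1 - t0 with hδdef
    have hδ : 0 < δ := sub_pos.mpr hlt
    set ε : ℕ → ℝ := fun k => δ / ((k + 3 : ℕ) : ℝ) with hεdef
    have hεpos : ∀ k, 0 < ε k := fun k => div_pos hδ (by positivity)
    have hεsmall : ∀ k, ε k < δ / 2 := by
      intro k
      have h3 : (2 : ℝ) < ((k + 3 : ℕ) : ℝ) := by
        have : (3 : ℝ) ≤ ((k + 3 : ℕ) : ℝ) := by exact_mod_cast Nat.le_add_left 3 k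
        linarith
      rw [div_lt_div_iff₀ (by positivity) (by norm_num)]
      nlinarith
    have hε0 : Tendsto ε atTop (𝓝 0) :=
      (tendsto_const_div_atTop_nhds_zero_nat δ).comp (tendsto_add_atTop_nat 3)
    set s0 : ℕ → ℝ := fun k => t0 + ε k with hs0def
    set s1 : ℕ → ℝ := fun k => t1 - ε k with hs1def
    have hs0mem : ∀ k, s0 k ∈ Ioo t0 t1 := fun k =>
      ⟨by simpa [hs0def] using hεpos k, by
        have := hεsmall k; simp only [hs0def]; linarith⟩
    have hs1mem : ∀ k, s1 k ∈ Ioo t0 t1 := fun k =>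
      ⟨by have := hεsmall k; simp only [hs1def]; linarith,
       by simpa [hs1def, sub_lt_self_iff] using hεpos k⟩
    have hs01 : ∀ k, s0 k ≤ s1 k := by
      intro k; have := hεsmall k; simp only [hs0def, hs1def]; linarith
    have hs0I : ∀ k, s0 k ∈ I := fun k => hIcc (Ioo_subset_Icc_self (hs0mem k))
    have hs1I : ∀ k, s1 k ∈ I := fun k => hIcc (Ioo_subset_Icc_self (hs1mem k))
    have hs0lim : Tendsto s0 atTop (𝓝 t0) := by
      have := tendsto_const_nhds (x := t0) (f := atTop (α := ℕ)) |>.add hε0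
      simpa using this
    have hs1lim : Tendsto s1 atTop (𝓝 t1) := by
      have := tendsto_const_nhds (x := t1) (f := atTop (α := ℕ)) |>.sub hε0
      simpa using this
    -- continuity of x
    have hcx : ∀ i, ContinuousOn (fun t => x t i) (Icc t0 t1) := fun i =>
      vec_continuousOn hxAC ht0 ht1 h01 hIcc i
    have hs1Icc : Tendsto s1 atTop (𝓝[Icc t0 t1] t1) :=
      tendsto_nhdsWithin_iff.mpr ⟨hs1lim,
        Eventually.of_forall fun k => Ioo_subset_Icc_self (hs1mem k)⟩
    have hs0Icc : Tendsto s0 atTop (𝓝[Icc t0 t1] t0) :=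
      tendsto_nhdsWithin_iff.mpr ⟨hs0lim,
        Eventually.of_forall fun k => Ioo_subset_Icc_self (hs0mem k)⟩
    have hx1 : ∀ i, Tendsto (fun k => x (s1 k) i) atTop (𝓝 (x t1 i)) := fun i =>
      ((hcx i) t1 (right_mem_Icc.mpr h01)).tendsto.comp hs1Icc
    have hx0 : ∀ i, Tendsto (fun k => x (s0 k) i) atTop (𝓝 (x t0 i)) := fun i =>
      ((hcx i) t0 (left_mem_Icc.mpr h01)).tendsto.comp hs0Icc
    -- limits of Q entries
    have hs1lt : Tendsto s1 atTop (𝓝[<] t1) :=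
      tendsto_nhdsWithin_iff.mpr ⟨hs1lim, Eventually.of_forall fun k => (hs1mem k).2⟩
    have hs0gt : Tendsto s0 atTop (𝓝[>] t0) :=
      tendsto_nhdsWithin_iff.mpr ⟨hs0lim, Eventually.of_forall fun k => (hs0mem k).1⟩
    have hQ1 : ∀ i j, Tendsto (fun k => Q (s1 k) i j) atTop (𝓝 (L t1 i j)) := fun i j =>
      (hL t1 ht1 i j).comp hs1lt
    have hQ0' : ∀ i j, Tendsto (fun k => Q (s0 k) i j) atTop (𝓝 (R t0 i j)) := fun i j =>
      (hR t0 ht0 i j).comp hs0gt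
    -- limits of quadratic forms
    have hA : Tendsto (fun k => (star (x (s1 k)) ⬝ᵥ (Q (s1 k) *ᵥ x (s1 k))).re) atTop
        (𝓝 ((star (x t1) ⬝ᵥ (L t1 *ᵥ x t1)).re)) := tendsto_quad hQ1 hx1
    have hB : Tendsto (fun k => (star (x (s0 k)) ⬝ᵥ (Q (s0 k) *ᵥ x (s0 k))).re) atTop
        (𝓝 ((star (x t0) ⬝ᵥ (R t0 *ᵥ x t0)).re)) := tendsto_quad hQ0' hx0
    -- limit of supply
    have hfint : IntegrableOn (fun t => (star (y t) ⬝ᵥ u t).re) (Icc t0 t1) :=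
      supply_integrand_integrable hu2 hy2 ht0 ht1
    have hGc : ContinuousOn (fun s => ∫ t in t0..s, (star (y t) ⬝ᵥ u t).re) (Icc t0 t1) := by
      have := intervalIntegral.continuousOn_primitive_interval
        (f := fun t => (star (y t) ⬝ᵥ u t).re) (a := t0) (b := t1)
        (by rw [uIcc_of_le h01]; exact hfint)
      rwa [uIcc_of_le h01] at this
    have hGint : ∀ a b, a ∈ Icc t0 t1 → b ∈ Icc t0 t1 →
        IntervalIntegrable (fun t => (star (y t) ⬝ᵥ u t).re) volume a b := by
      intro a b ha hb
      refine (hfint.mono_set ?_).intervalIntegrable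
      rw [← uIcc_of_le h01]
      exact uIcc_subset_uIcc_iff_mem.mpr ⟨by rwa [uIcc_of_le h01], by rwa [uIcc_of_le h01]⟩
    have hsup_eq : ∀ k, supply u y (s0 k) (s1 k) =
        (∫ t in t0..(s1 k), (star (y t) ⬝ᵥ u t).re) -
        (∫ t in t0..(s0 k), (star (y t) ⬝ᵥ u t).re) := by
      intro k
      rw [supply, intervalIntegral.integral_interval_sub_left
        (hGint t0 (s1 k) (left_mem_Icc.mpr h01) (Ioo_subset_Icc_self (hs1mem k)))
        (hGint t0 (s0 k) (left_mem_Icc.mpr h01) (Ioo_subset_Icc_self (hs0mem k)))]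
    have hC : Tendsto (fun k => supply u y (s0 k) (s1 k)) atTop (𝓝 (supply u y t0 t1)) := by
      have h1 : Tendsto (fun k => ∫ t in t0..(s1 k), (star (y t) ⬝ᵥ u t).re) atTop
          (𝓝 (∫ t in t0..t1, (star (y t) ⬝ᵥ u t).re)) :=
        (hGc t1 (right_mem_Icc.mpr h01)).tendsto.comp hs1Icc
      have h0 : Tendsto (fun k => ∫ t in t0..(s0 k), (star (y t) ⬝ᵥ u t).re) atTop
          (𝓝 (∫ t in t0..t0, (star (y t) ⬝ᵥ u t).re)) :=
        (hGc t0 (left_mem_Icc.mpr h01)).tendsto.comp hs0Icc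
      rw [intervalIntegral.integral_same] at h0
      have := h1.sub h0
      rw [sub_zero] at this
      simp only [supply]
      exact Tendsto.congr (fun k => (hsup_eq k).symm) this
    -- per-k dissipation inequality
    have hdiss : ∀ k, quadStorage Q (s1 k) (x (s1 k)) - quadStorage Q (s0 k) (x (s0 k)) ≤
        supply u y (s0 k) (s1 k) := fun k =>
      hQdiss x u y hsol (s0 k) (s1 k) (hs0I k) (hs1I k) (hs01 k)
    -- pass to the limit
    have hlim : (1/2 : ℝ) * (star (x t1) ⬝ᵥ (L t1 *ᵥ x t1)).re -
        (1/2 : ℝ) * (star (x t0) ⬝ᵥ (R t0 *ᵥ x t0)).re ≤ supply u y t0 t1 := by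
      refine le_of_tendsto_of_tendsto' ?_ hC hdiss
      exact ((hA.const_mul (1/2 : ℝ)).sub (hB.const_mul (1/2 : ℝ)))
    have hub : quadStorage Qt t1 (x t1) ≤ (1/2 : ℝ) * (star (x t1) ⬝ᵥ (L t1 *ᵥ x t1)).re := by
      have := quad_mono (hsandwich t1 ht1).1 (x t1)
      simp only [quadStorage]; linarith
    have hlb : (1/2 : ℝ) * (star (x t0) ⬝ᵥ (R t0 *ᵥ x t0)).re ≤ quadStorage Qt t0 (x t0) := by
      have := quad_mono (hsandwich t0 ht0).2 (x t0)
      simp only [quadStorage]; linarith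
    linarith

end Paper
end
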